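/- arXiv:2112.15179 — 4 statements merged into one kernel-verified Lean document; each statement's English description precedes it below -/
import Mathlib

section
/- Let N be an internally labelled phylogenetic network. Then N = F(U(N)), i.e. N is recovered from its unfolding U(N) by the folding operation F. -/
/-- The data of a rooted binary internally multi-labelled phylogenetic network (IMLN):
a finite directed graph (no parallel arcs, since `Arc` is a relation) with a
distinguished root, leaf labels in `X` and reticulation/elementary labels in `Λ`. -/
structure IMLN (X : Type) (Λ : Type) : Type 1 where
  V : Type
  fintypeV : Fintype V
  Arc : V → V → Prop
  root : V
  leafLabel : V → X
  retLabel : V → Λ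

namespace IMLN

variable {X Λ : Type}

/-- In-degree of a node. -/
noncomputable def inDeg (N : IMLN X Λ) (v : N.V) : ℕ := {u : N.V | N.Arc u v}.ncard

/-- Out-degree of a node. -/
noncomputable def outDeg (N : IMLN X Λ) (v : N.V) : ℕ := {w : N.V | N.Arc v w}.ncard

/-- A leaf: a node of out-degree zero. -/
def IsLeaf (N : IMLN X Λ) (v : N.V) : Prop := N.outDeg v = 0

/-- A reticulation node: in-degree two and out-degree one. -/
def IsRet (N : IMLN X Λ) (v : N.V) : Prop := N.inDeg v = 2 ∧ N.outDeg v = 1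

/-- An elementary node: in-degree at most one and out-degree one. -/
def IsElem (N : IMLN X Λ) (v : N.V) : Prop := N.inDeg v ≤ 1 ∧ N.outDeg v = 1

/-- A tree node: a leaf, or a node of out-degree two (in particular not of out-degree one). -/
def IsTreeNode (N : IMLN X Λ) (v : N.V) : Prop := N.outDeg v ≠ 1

/-- An internal node: a non-leaf. -/
def IsInternal (N : IMLN X Λ) (v : N.V) : Prop := ¬ N.IsLeaf v

/-- Reachability by a (possibly trivial) directed path. -/
def Reaches (N : IMLN X Λ) (u v : N.V) : Prop := Relation.ReflTransGen N.Arc u v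

/-- Well-formedness: `N` is a rooted binary internally multi-labelled phylogenetic network. -/
structure IsIMLN (N : IMLN X Λ) : Prop where
  acyclic : ∀ v : N.V, ¬ Relation.TransGen N.Arc v v
  rootIn : N.inDeg N.root = 0
  rootOut : N.outDeg N.root = 1 ∨ N.outDeg N.root = 2
  uniqueRoot : ∀ v : N.V, N.inDeg v = 0 → v = N.root
  connected : ∀ v : N.V, N.Reaches N.root v
  degrees : ∀ v : N.V, v ≠ N.root →
      (N.inDeg v = 1 ∧ (N.outDeg v = 0 ∨ N.outDeg v = 1 ∨ N.outDeg v = 2)) ∨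
      (N.inDeg v = 2 ∧ N.outDeg v = 1)
  leafSurj : ∀ x : X, ∃ v : N.V, N.IsLeaf v ∧ N.leafLabel v = x
  retInj : ∀ u v : N.V, N.IsRet u → N.IsRet v → N.retLabel u = N.retLabel v → u = v
  retElemLabels : ∀ u v : N.V, N.IsRet u → N.IsElem v → N.retLabel u ≠ N.retLabel v

/-- An internally labelled phylogenetic network: an IMLN with no elementary nodes
whose leaf labelling and reticulation labelling are bijections. -/
def IsILPN (N : IMLN X Λ) : Prop :=
  N.IsIMLN ∧ (∀ v : N.V, ¬ N.IsElem v) ∧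
    (∀ x : X, ∃! v : N.V, N.IsLeaf v ∧ N.leafLabel v = x) ∧
    (∀ l : Λ, ∃! v : N.V, N.IsRet v ∧ N.retLabel v = l)

/-- `u ∈ R_min(N)`: a reticulation node with no reticulation node strictly below it. -/
def IsMinRet (N : IMLN X Λ) (u : N.V) : Prop :=
  N.IsRet u ∧ ∀ w : N.V, N.IsRet w → N.Reaches u w → w = u

/-- The sub-IMLN `N(u)` rooted at `u`. -/
noncomputable def sub (N : IMLN X Λ) (u : N.V) : IMLN X Λ where
  V := {v : N.V // N.Reaches u v}
  fintypeV := @Subtype.fintype _ _ (Classical.decPred _) N.fintypeV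
  Arc a b := N.Arc a.1 b.1
  root := ⟨u, Relation.ReflTransGen.refl⟩
  leafLabel a := N.leafLabel a.1
  retLabel a := N.retLabel a.1

/-- Isomorphism of IMLNs up to a permutation of the leaf labels and of the
internal labels: an arc-preserving bijection relating the labels via `σX`, `σΛ`. -/
def IsomUpTo (σX : Equiv.Perm X) (σΛ : Equiv.Perm Λ) (N₁ N₂ : IMLN X Λ) : Prop :=
  ∃ f : N₁.V ≃ N₂.V,
    (∀ u v : N₁.V, N₁.Arc u v ↔ N₂.Arc (f u) (f v)) ∧
    (∀ v : N₁.V, N₁.IsLeaf v → N₁.leafLabel v = σX (N₂.leafLabel (f v))) ∧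
    (∀ v : N₁.V, N₁.IsRet v ∨ N₁.IsElem v → N₁.retLabel v = σΛ (N₂.retLabel (f v)))

/-- Isomorphism of IMLNs: an arc-preserving bijection preserving leaf labels and
the labels of reticulation and elementary nodes. -/
def Isom (N₁ N₂ : IMLN X Λ) : Prop := IsomUpTo (Equiv.refl X) (Equiv.refl Λ) N₁ N₂

/-- `N'` is the unfolded IMLN `U(N,u)` of `N` at `u`: the arcs from the two parents
`v₁, v₂` of `u` to `u` are deleted, the subnetwork rooted at `u` is duplicated with
all its labels (`g` embeds `N` itself, `g'` embeds the new copy of the subnetwork),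
and arcs from `v₁` to one copy of `u` and from `v₂` to the other copy are added. -/
def IsUnfoldAt (N N' : IMLN X Λ) (u : N.V) : Prop :=
  ∃ g g' : N.V → N'.V,
    Function.Injective g ∧
    (∀ a b : N.V, N.Reaches u a → N.Reaches u b → g' a = g' b → a = b) ∧
    (∀ a b : N.V, N.Reaches u b → g a ≠ g' b) ∧
    (∀ x : N'.V, (∃ a, x = g a) ∨ (∃ a, N.Reaches u a ∧ x = g' a)) ∧
    g N.root = N'.root ∧
    (∀ a : N.V, N'.leafLabel (g a) = N.leafLabel a) ∧
    (∀ a : N.V, N'.retLabel (g a) = N.retLabel a) ∧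
    (∀ a : N.V, N.Reaches u a → N'.leafLabel (g' a) = N.leafLabel a) ∧
    (∀ a : N.V, N.Reaches u a → N'.retLabel (g' a) = N.retLabel a) ∧
    ∃ v₁ v₂ : N.V, v₁ ≠ v₂ ∧ N.Arc v₁ u ∧ N.Arc v₂ u ∧
      ∀ x y : N'.V, N'.Arc x y ↔
        ((∃ a b : N.V, N.Arc a b ∧ b ≠ u ∧ x = g a ∧ y = g b) ∨
         (∃ a b : N.V, N.Reaches u a ∧ N.Reaches u b ∧ N.Arc a b ∧ x = g' a ∧ y = g' b) ∨
         (x = g v₁ ∧ y = g u) ∨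
         (x = g v₂ ∧ y = g' u))

/-- One unfolding step, performed at the (necessarily unique) reticulation node
of `N` labelled `l`, which is required to lie in `R_min(N)`. -/
def UnfoldStep (N N' : IMLN X Λ) (l : Λ) : Prop :=
  ∃ u : N.V, N.IsMinRet u ∧ N.retLabel u = l ∧ IsUnfoldAt N N' u

/-- `IsUnfoldSeq N ls M`: `M` is obtained from `N` by the sequence of unfoldings at
the reticulation nodes labelled by the list `ls` (each minimal at its turn);
this encodes the notion of a compatible sequence and its associated sequence of IMLNs. -/
inductive IsUnfoldSeq : IMLN X Λ → List Λ → IMLN X Λ → Prop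
  | nil (N : IMLN X Λ) : IsUnfoldSeq N [] N
  | cons {N M M' : IMLN X Λ} {l : Λ} {ls : List Λ} :
      UnfoldStep N M l → IsUnfoldSeq M ls M' → IsUnfoldSeq N (l :: ls) M'

/-- A list of reticulation nodes of `N` is a compatible sequence if the associated
sequence of unfoldings exists. -/
def Compatible (N : IMLN X Λ) (us : List N.V) : Prop :=
  (∀ u ∈ us, N.IsRet u) ∧ ∃ M : IMLN X Λ, IsUnfoldSeq N (us.map N.retLabel) M

/-- The order `≤_E` on elementary nodes: `a ≤_E b` iff there are elementary nodes
`a', b'` with the same labels as `a, b` and a directed path from `b` to `a`. -/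
def LE_E (N : IMLN X Λ) (a b : N.V) : Prop :=
  N.IsElem a ∧ N.IsElem b ∧
    ∃ a' b' : N.V, N.IsElem a' ∧ N.IsElem b' ∧
      N.retLabel a' = N.retLabel a ∧ N.retLabel b' = N.retLabel b ∧ N.Reaches b a

/-- `a ∈ E_max(N)`: a maximal elementary node under `≤_E`. -/
def IsEMax (N : IMLN X Λ) (a : N.V) : Prop :=
  N.IsElem a ∧ ∀ b : N.V, N.LE_E a b → b = a

/-- `N'` is the folded IMLN `F(N,u)` of `N` at `u ∈ E_max(N)`: choosing the other
node `v ∈ E_max(N)` with the same label and isomorphic rooted subnetwork, the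
subnetwork rooted at `v` and the arc from the parent `vp` of `v` to `v` are deleted
and the arc `(vp, u)` is added. -/
def IsFoldAt (N N' : IMLN X Λ) (u : N.V) : Prop :=
  N.IsEMax u ∧
  ∃ v : N.V, v ≠ u ∧ N.IsEMax v ∧ N.retLabel v = N.retLabel u ∧
    Isom (N.sub u) (N.sub v) ∧
    ∃ vp : N.V, N.Arc vp v ∧
      ∃ h : N'.V → N.V,
        Function.Injective h ∧
        (∀ x : N'.V, ¬ N.Reaches v (h x)) ∧
        (∀ a : N.V, ¬ N.Reaches v a → ∃ x, h x = a) ∧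
        h N'.root = N.root ∧
        (∀ x : N'.V, N'.leafLabel x = N.leafLabel (h x)) ∧
        (∀ x : N'.V, N'.retLabel x = N.retLabel (h x)) ∧
        (∀ x y : N'.V, N'.Arc x y ↔ (N.Arc (h x) (h y) ∨ (h x = vp ∧ h y = u)))

/-- `IsFoldSeq N ls M`: `M` is obtained from `N` by successively folding at nodes
carrying the labels in the list `ls`. -/
inductive IsFoldSeq : IMLN X Λ → List Λ → IMLN X Λ → Prop
  | nil (N : IMLN X Λ) : IsFoldSeq N [] N
  | cons {N M M' : IMLN X Λ} {l : Λ} {ls : List Λ} :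
      (∃ u : N.V, N.retLabel u = l ∧ IsFoldAt N M u) → IsFoldSeq M ls M' →
      IsFoldSeq N (l :: ls) M'

/-- Pseudo-network condition (i): no reticulation node descends from an elementary node. -/
def PseudoCondI (N : IMLN X Λ) : Prop :=
  ∀ e r : N.V, N.IsElem e → N.IsRet r → ¬ N.Reaches e r

/-- Pseudo-network condition (ii): every node of `E_max(N)` has a mate with the
same label and isomorphic rooted subnetwork. -/
def PseudoCondII (N : IMLN X Λ) : Prop :=
  ∀ u : N.V, N.IsEMax u → ∃ v : N.V, v ≠ u ∧ N.IsEMax v ∧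
    N.retLabel v = N.retLabel u ∧ Isom (N.sub u) (N.sub v)

/-- Fuelled version of the recursive definition of pseudo-networks. -/
def IsPseudoN : ℕ → IMLN X Λ → Prop
  | 0, N => PseudoCondI N ∧ PseudoCondII N
  | n + 1, N => PseudoCondI N ∧ PseudoCondII N ∧
      ∀ (u : N.V) (N' : IMLN X Λ), N.IsEMax u → IsFoldAt N N' u → IsPseudoN n N'

/-- `N` is a pseudo-network: conditions (i) and (ii) hold, and every folding at a
node of `E_max(N)` yields again a pseudo-network. -/
def IsPseudo (N : IMLN X Λ) : Prop := ∀ n : ℕ, IsPseudoN n N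

/-- The polynomial ring `ℤ[x₁,…,xₙ,λ₁,…,λᵣ,y]`, with one variable for each leaf
label, one for each internal label, and one extra variable `y`. -/
abbrev PolyRing (X Λ : Type) := MvPolynomial (X ⊕ (Λ ⊕ Unit)) ℤ

/-- The variable `x_i`. -/
noncomputable def xVar (x : X) : PolyRing X Λ := MvPolynomial.X (Sum.inl x)

/-- The variable `λ_i`. -/
noncomputable def lVar (l : Λ) : PolyRing X Λ := MvPolynomial.X (Sum.inr (Sum.inl l))

/-- The variable `y`. -/
noncomputable def yVar : PolyRing X Λ := MvPolynomial.X (Sum.inr (Sum.inr ()))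

/-- `P` is the polynomial assignment `p` on the nodes of `N`:
`p(u) = φ(u)` on leaves, `p(u) = y + p(v₁)p(v₂)` on internal tree nodes with
children `v₁ ≠ v₂`, and `p(u) = ℓ(u)·p(v)` on nodes with a single child `v`. -/
def IsPolyAssignment (N : IMLN X Λ) (P : N.V → PolyRing X Λ) : Prop :=
  (∀ v : N.V, N.IsLeaf v → P v = xVar (N.leafLabel v)) ∧
  (∀ v v₁ v₂ : N.V, v₁ ≠ v₂ → N.Arc v v₁ → N.Arc v v₂ →
      P v = yVar + P v₁ * P v₂) ∧
  (∀ v w : N.V, N.outDeg v = 1 → N.Arc v w →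
      P v = lVar (N.retLabel v) * P w)

/-- The action `σ·p` of a permutation of the labels (fixing `X` and `Λ` setwise,
and fixing `y`) on polynomials, by renaming variables. -/
noncomputable def permRename (σX : Equiv.Perm X) (σΛ : Equiv.Perm Λ) (p : PolyRing X Λ) : PolyRing X Λ :=
  MvPolynomial.rename (Sum.map (⇑σX) (Sum.map (⇑σΛ) id)) p

/-- A strong path: a directed path all of whose intermediate nodes are elementary
or reticulation nodes.  `StrongReach N u v` says that `u` is a strong ancestor of
`v` (equivalently, `v` is a strong descendant of `u`). -/
inductive StrongReach (N : IMLN X Λ) : N.V → N.V → Prop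
  | refl (u : N.V) : StrongReach N u u
  | single {u v : N.V} : N.Arc u v → StrongReach N u v
  | cons {u w v : N.V} : N.Arc u w → (N.IsElem w ∨ N.IsRet w) →
      StrongReach N w v → StrongReach N u v

/-- `N₁` and `N₂` are equivalent modulo strong paths, with respect to the label
permutation `(σX, σΛ)` and polynomial assignments `P₁`, `P₂`:
(i) `p(N₁) = σ·p(N₂)`; (ii) there is a bijection `f` between the tree nodes
preserving strong descendance; (iii) `p(u) = σ·p(f(u))` for every tree node `u`. -/
def EquivModSP (N₁ N₂ : IMLN X Λ) (P₁ : N₁.V → PolyRing X Λ) (P₂ : N₂.V → PolyRing X Λ)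
    (σX : Equiv.Perm X) (σΛ : Equiv.Perm Λ) : Prop :=
  P₁ N₁.root = permRename σX σΛ (P₂ N₂.root) ∧
  ∃ f : {v : N₁.V // N₁.IsTreeNode v} ≃ {v : N₂.V // N₂.IsTreeNode v},
    (∀ u v : {v : N₁.V // N₁.IsTreeNode v},
        StrongReach N₁ u.1 v.1 → StrongReach N₂ (f u).1 (f v).1) ∧
    (∀ u : {v : N₁.V // N₁.IsTreeNode v}, P₁ u.1 = permRename σX σΛ (P₂ (f u).1))

/-- A tree node `u` is separable if either both of its children are tree nodes, or
some tree node `u₁ ≠ u` is a strong ancestor of one child `c` of `u` and either is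
a strong ancestor of no other strong descendant of `u`, or is also a strong
ancestor of one of the strong descendants of `c`. -/
def IsSeparableNode (N : IMLN X Λ) (u : N.V) : Prop :=
  N.IsTreeNode u → ∀ v₁ v₂ : N.V, v₁ ≠ v₂ → N.Arc u v₁ → N.Arc u v₂ →
    ((N.IsTreeNode v₁ ∧ N.IsTreeNode v₂) ∨
      ∃ u₁ : N.V, u₁ ≠ u ∧ N.IsTreeNode u₁ ∧
        ∃ c : N.V, (c = v₁ ∨ c = v₂) ∧ StrongReach N u₁ c ∧
          ((∀ w : N.V, StrongReach N u w → w ≠ c → ¬ StrongReach N u₁ w) ∨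
           (∃ w : N.V, w ≠ c ∧ StrongReach N c w ∧ StrongReach N u₁ w)))

/-- A network is separable if all its tree nodes are separable. -/
def IsSeparable (N : IMLN X Λ) : Prop := ∀ u : N.V, N.IsSeparableNode u

/-- A (rooted binary) phylogenetic network: an IMLN with no elementary nodes, root
of out-degree two, and bijective leaf labelling (internal labels are ignored). -/
def IsPhyloNet (N : IMLN X Λ) : Prop :=
  N.IsIMLN ∧ (∀ v : N.V, ¬ N.IsElem v) ∧ N.outDeg N.root = 2 ∧
    (∀ x : X, ∃! v : N.V, N.IsLeaf v ∧ N.leafLabel v = x)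

/-- `N'` is obtained from `N` by a single cherry-reduction: either reducing a leaf
`b` of a cherry `{a,b}` (deleting `b` and suppressing the resulting elementary
node, the root moving to `a` if the common parent was the root), or cutting a
reticulated cherry `{a,b}` (deleting the arc `(p_a,p_b)` and suppressing the two
resulting elementary nodes). -/
def IsCherryReduce (N N' : IMLN X Λ) : Prop :=
  (∃ a b pa : N.V, a ≠ b ∧ N.IsLeaf a ∧ N.IsLeaf b ∧ N.Arc pa a ∧ N.Arc pa b ∧
    ∃ h : N'.V → N.V,
      Function.Injective h ∧
      (∀ x : N'.V, h x ≠ b ∧ h x ≠ pa) ∧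
      (∀ c : N.V, c ≠ b → c ≠ pa → ∃ x, h x = c) ∧
      (∀ x : N'.V, N'.leafLabel x = N.leafLabel (h x)) ∧
      ((pa = N.root ∧ h N'.root = a) ∨ (pa ≠ N.root ∧ h N'.root = N.root)) ∧
      (∀ x y : N'.V, N'.Arc x y ↔
        (N.Arc (h x) (h y) ∨ (N.Arc (h x) pa ∧ h y = a)))) ∨
  (∃ a b pa pb : N.V, a ≠ b ∧ N.IsLeaf a ∧ N.IsLeaf b ∧ N.Arc pa a ∧ N.Arc pb b ∧
    N.IsRet pb ∧ N.Arc pa pb ∧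
    ∃ h : N'.V → N.V,
      Function.Injective h ∧
      (∀ x : N'.V, h x ≠ pa ∧ h x ≠ pb) ∧
      (∀ c : N.V, c ≠ pa → c ≠ pb → ∃ x, h x = c) ∧
      (∀ x : N'.V, N'.leafLabel x = N.leafLabel (h x)) ∧
      ((pa = N.root ∧ h N'.root = a) ∨ (pa ≠ N.root ∧ h N'.root = N.root)) ∧
      (∀ x y : N'.V, N'.Arc x y ↔
        (N.Arc (h x) (h y) ∨ (N.Arc (h x) pa ∧ h y = a) ∨ (N.Arc (h x) pb ∧ h y = b))))

/-- A network is orchard if some sequence of cherry-reductions reduces it to a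
single vertex. -/
inductive IsOrchard : IMLN X Λ → Prop
  | single (N : IMLN X Λ) : (∀ v : N.V, v = N.root) → IsOrchard N
  | step {N N' : IMLN X Λ} : IsCherryReduce N N' → IsOrchard N' → IsOrchard N

/-- `ArcPath N u v n`: there is a directed path of length `n` from `u` to `v`. -/
inductive ArcPath (N : IMLN X Λ) : N.V → N.V → ℕ → Prop
  | refl (u : N.V) : ArcPath N u u 0
  | step {u w v : N.V} {n : ℕ} : N.Arc u w → ArcPath N w v n → ArcPath N u v (n + 1)

end IMLN

namespace IMLN

variable {X Λ : Type}

lemma finV (N : IMLN X Λ) : Finite N.V := by haveI := N.fintypeV; infer_instance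

lemma sfin (N : IMLN X Λ) (s : Set N.V) : s.Finite := by
  haveI := N.finV; exact Set.toFinite s

/-- The invariant maintained along the unfolding sequence. -/
structure Inv (N : IMLN X Λ) : Prop where
  acyclic : ∀ v : N.V, ¬ Relation.TransGen N.Arc v v
  degcond : ∀ v : N.V, N.inDeg v ≤ 1 ∨ N.IsRet v
  retInj : ∀ u v : N.V, N.IsRet u → N.IsRet v → N.retLabel u = N.retLabel v → u = v
  retElem : ∀ u v : N.V, N.IsRet u → N.IsElem v → N.retLabel u ≠ N.retLabel v

lemma Inv.of_ilpn {N : IMLN X Λ} (h : N.IsILPN) : N.Inv := by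
  obtain ⟨h1, _, _, _⟩ := h
  refine ⟨h1.acyclic, ?_, h1.retInj, h1.retElemLabels⟩
  intro v
  by_cases hv : v = N.root
  · left; rw [hv, h1.rootIn]; omega
  · rcases h1.degrees v hv with ⟨h2, _⟩ | h2
    · left; omega
    · right; exact h2

lemma no_arc_back {N : IMLN X Λ} (hac : ∀ v : N.V, ¬ Relation.TransGen N.Arc v v)
    {a b : N.V} (hab : N.Arc a b) (hba : N.Reaches b a) : False :=
  hac a (Relation.TransGen.head' hab hba)

lemma parents_pair {N : IMLN X Λ} {u v₁ v₂ : N.V} (h : N.inDeg u = 2) (h12 : v₁ ≠ v₂)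
    (h1 : N.Arc v₁ u) (h2 : N.Arc v₂ u) : ∀ a : N.V, N.Arc a u ↔ (a = v₁ ∨ a = v₂) := by
  obtain ⟨x, y, hxy, hset⟩ := Set.ncard_eq_two.1 h
  have hv1 : v₁ ∈ ({x, y} : Set N.V) := hset ▸ h1
  have hv2 : v₂ ∈ ({x, y} : Set N.V) := hset ▸ h2
  have : ({x, y} : Set N.V) = {v₁, v₂} := by
    rcases hv1 with rfl | rfl <;> rcases hv2 with rfl | rfl <;>
      first | (exact absurd rfl h12) | simp [Set.pair_comm]
  intro a
  have := hset.trans this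
  constructor
  · intro ha
    have : a ∈ ({v₁, v₂} : Set N.V) := this ▸ ha
    simpa using this
  · rintro (rfl | rfl) <;> assumption

variable {X Λ : Type}

/-- Bundled data of an unfolding `N' = U(N,u)` at a minimal reticulation `u`,
together with the invariant on `N`. -/
structure UCtx (N N' : IMLN X Λ) (u : N.V) where
  g : N.V → N'.V
  g' : N.V → N'.V
  v₁ : N.V
  v₂ : N.V
  hInv : N.Inv
  minret : N.IsMinRet u
  ginj : Function.Injective g
  g'inj : ∀ a b : N.V, N.Reaches u a → N.Reaches u b → g' a = g' b → a = b
  disj : ∀ a b : N.V, N.Reaches u b → g a ≠ g' b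
  vsurj : ∀ x : N'.V, (∃ a, x = g a) ∨ (∃ a, N.Reaches u a ∧ x = g' a)
  leafg : ∀ a : N.V, N'.leafLabel (g a) = N.leafLabel a
  retg : ∀ a : N.V, N'.retLabel (g a) = N.retLabel a
  leafg' : ∀ a : N.V, N.Reaches u a → N'.leafLabel (g' a) = N.leafLabel a
  retg' : ∀ a : N.V, N.Reaches u a → N'.retLabel (g' a) = N.retLabel a
  vne : v₁ ≠ v₂
  a1 : N.Arc v₁ u
  a2 : N.Arc v₂ u
  harc : ∀ x y : N'.V, N'.Arc x y ↔
      ((∃ a b : N.V, N.Arc a b ∧ b ≠ u ∧ x = g a ∧ y = g b) ∨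
       (∃ a b : N.V, N.Reaches u a ∧ N.Reaches u b ∧ N.Arc a b ∧ x = g' a ∧ y = g' b) ∨
       (x = g v₁ ∧ y = g u) ∨
       (x = g v₂ ∧ y = g' u))

namespace UCtx

variable {N N' : IMLN X Λ} {u : N.V} (C : UCtx N N' u)
include C
attribute [local instance] Classical.propDecidable

lemma parents_u : ∀ a : N.V, N.Arc a u ↔ (a = C.v₁ ∨ a = C.v₂) :=
  parents_pair C.minret.1.1 C.vne C.a1 C.a2

lemma not_reach_v₁ : ¬ N.Reaches u C.v₁ := fun h => no_arc_back C.hInv.acyclic C.a1 h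
lemma not_reach_v₂ : ¬ N.Reaches u C.v₂ := fun h => no_arc_back C.hInv.acyclic C.a2 h

/-- crossing lemma in `N`. -/
lemma crossing {a b : N.V} (hab : N.Arc a b) (hb : N.Reaches u b) (ha : ¬ N.Reaches u a) :
    b = u := by
  by_contra hbu
  -- b has a parent on the path from u, distinct from a
  obtain ⟨p, hp, hpb⟩ : ∃ p, N.Reaches u p ∧ N.Arc p b := by
    rcases (Relation.ReflTransGen.cases_tail hb) with rfl | ⟨p, hp, hpb⟩
    · exact absurd rfl hbu
    · exact ⟨p, hp, hpb⟩
  have hpa : p ≠ a := fun h => ha (h ▸ hp)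
  have h2 : 2 ≤ N.inDeg b := by
    have : ({p, a} : Set N.V) ⊆ {c | N.Arc c b} := by
      rintro c (rfl | rfl) <;> simpa using ‹_›
    calc (2 : ℕ) = ({p, a} : Set N.V).ncard := by
          rw [Set.ncard_pair hpa]
      _ ≤ _ := Set.ncard_le_ncard this (N.sfin _)
  rcases Inv.degcond C.hInv b with h | h
  · omega
  · exact hbu (C.minret.2 b h hb)

lemma gu_ne_g'u : C.g u ≠ C.g' u := C.disj u u Relation.ReflTransGen.refl

/-- arcs out of a `g`-node. -/
lemma arc_out_g {a : N.V} {y : N'.V} (h : N'.Arc (C.g a) y) :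
    (∃ b, N.Arc a b ∧ b ≠ u ∧ y = C.g b) ∨ (a = C.v₁ ∧ y = C.g u) ∨ (a = C.v₂ ∧ y = C.g' u) := by
  rcases (C.harc _ _).1 h with ⟨a', b, hab, hbu, hx, hy⟩ | ⟨a', b, ha', hb, hab, hx, hy⟩ |
      ⟨hx, hy⟩ | ⟨hx, hy⟩
  · exact Or.inl ⟨b, C.ginj hx ▸ hab, hbu, hy⟩
  · exact absurd hx (C.disj a a' ha')
  · exact Or.inr (Or.inl ⟨C.ginj hx, hy⟩)
  · exact Or.inr (Or.inr ⟨C.ginj hx, hy⟩)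

/-- arcs out of a `g'`-node. -/
lemma arc_out_g' {a : N.V} {y : N'.V} (ha : N.Reaches u a) (h : N'.Arc (C.g' a) y) :
    ∃ b, N.Reaches u b ∧ N.Arc a b ∧ y = C.g' b := by
  rcases (C.harc _ _).1 h with ⟨a', b, hab, hbu, hx, hy⟩ | ⟨a', b, ha', hb, hab, hx, hy⟩ |
      ⟨hx, hy⟩ | ⟨hx, hy⟩
  · exact absurd hx (C.disj a' a ha).symm
  · exact ⟨b, hb, (C.g'inj a' a ha' ha hx.symm) ▸ hab, hy⟩
  · exact absurd hx (C.disj C.v₁ a ha).symm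
  · exact absurd hx (C.disj C.v₂ a ha).symm

/-- arcs into a `g`-node. -/
lemma arc_in_g {b : N.V} {x : N'.V} (h : N'.Arc x (C.g b)) :
    (∃ a, N.Arc a b ∧ b ≠ u ∧ x = C.g a) ∨ (b = u ∧ x = C.g C.v₁) := by
  rcases (C.harc _ _).1 h with ⟨a', b', hab, hbu, hx, hy⟩ | ⟨a', b', ha', hb, hab, hx, hy⟩ |
      ⟨hx, hy⟩ | ⟨hx, hy⟩
  · exact Or.inl ⟨a', (C.ginj hy) ▸ hab, (C.ginj hy) ▸ hbu, hx⟩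
  · exact absurd hy (C.disj b b' hb)
  · exact Or.inr ⟨C.ginj hy, hx⟩
  · exact absurd hy (C.disj b u Relation.ReflTransGen.refl)

/-- arcs into a `g'`-node. -/
lemma arc_in_g' {b : N.V} {x : N'.V} (hb : N.Reaches u b) (h : N'.Arc x (C.g' b)) :
    (∃ a, N.Reaches u a ∧ N.Arc a b ∧ x = C.g' a) ∨ (b = u ∧ x = C.g C.v₂) := by
  rcases (C.harc _ _).1 h with ⟨a', b', hab, hbu, hx, hy⟩ | ⟨a', b', ha', hb', hab, hx, hy⟩ |
      ⟨hx, hy⟩ | ⟨hx, hy⟩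
  · exact absurd hy (C.disj b' b hb).symm
  · exact ⟨a', ha', (C.g'inj b' b hb' hb hy.symm) ▸ hab, hx⟩ |> Or.inl
  · exact absurd hy (C.disj u b hb).symm
  · exact Or.inr ⟨(C.g'inj u b Relation.ReflTransGen.refl hb hy.symm).symm ▸ rfl, hx⟩


lemma reach_g' {a : N.V} (ha : N.Reaches u a) : N'.Reaches (C.g' u) (C.g' a) := by
  induction ha with
  | refl => exact Relation.ReflTransGen.refl
  | @tail b c hb harc ih =>
      exact Relation.ReflTransGen.tail ih
        ((C.harc _ _).2 (Or.inr (Or.inl ⟨b, c, hb, hb.tail harc, harc, rfl, rfl⟩)))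

lemma desc_g' {x : N'.V} (h : N'.Reaches (C.g' u) x) :
    ∃ a, N.Reaches u a ∧ x = C.g' a := by
  induction h with
  | refl => exact ⟨u, Relation.ReflTransGen.refl, rfl⟩
  | tail _ harc ih =>
      obtain ⟨a, ha, rfl⟩ := ih
      obtain ⟨b, hb, _, rfl⟩ := C.arc_out_g' ha harc
      exact ⟨b, hb, rfl⟩

lemma reach_g {a : N.V} (ha : N.Reaches u a) : N'.Reaches (C.g u) (C.g a) := by
  induction ha with
  | refl => exact Relation.ReflTransGen.refl
  | @tail b c hb harc ih =>
      have hcu : c ≠ u := fun h => no_arc_back C.hInv.acyclic (h ▸ harc) hb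
      exact Relation.ReflTransGen.tail ih
        ((C.harc _ _).2 (Or.inl ⟨b, c, harc, hcu, rfl, rfl⟩))

lemma desc_g {x : N'.V} (h : N'.Reaches (C.g u) x) :
    ∃ a, N.Reaches u a ∧ x = C.g a := by
  induction h with
  | refl => exact ⟨u, Relation.ReflTransGen.refl, rfl⟩
  | tail _ harc ih =>
      obtain ⟨a, ha, rfl⟩ := ih
      rcases C.arc_out_g harc with ⟨b, hab, hbu, rfl⟩ | ⟨rfl, rfl⟩ | ⟨rfl, rfl⟩
      · exact ⟨b, ha.tail hab, rfl⟩
      · exact absurd ha C.not_reach_v₁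
      · exact absurd ha C.not_reach_v₂

lemma parents_gu : {x : N'.V | N'.Arc x (C.g u)} = {C.g C.v₁} := by
  ext x
  simp only [Set.mem_setOf_eq, Set.mem_singleton_iff]
  constructor
  · intro h
    rcases C.arc_in_g h with ⟨a, _, hbu, _⟩ | ⟨_, rfl⟩
    · exact absurd rfl hbu
    · rfl
  · rintro rfl
    exact (C.harc _ _).2 (Or.inr (Or.inr (Or.inl ⟨rfl, rfl⟩)))

lemma parents_g'u : {x : N'.V | N'.Arc x (C.g' u)} = {C.g C.v₂} := by
  ext x
  simp only [Set.mem_setOf_eq, Set.mem_singleton_iff]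
  constructor
  · intro h
    rcases C.arc_in_g' Relation.ReflTransGen.refl h with ⟨a, ha, hau, rfl⟩ | ⟨_, rfl⟩
    · rcases (C.parents_u a).1 hau with rfl | rfl
      · exact absurd ha C.not_reach_v₁
      · exact absurd ha C.not_reach_v₂
    · rfl
  · rintro rfl
    exact (C.harc _ _).2 (Or.inr (Or.inr (Or.inr ⟨rfl, rfl⟩)))

lemma inDeg_gu : N'.inDeg (C.g u) = 1 := by
  rw [inDeg, C.parents_gu, Set.ncard_singleton]

lemma inDeg_g'u : N'.inDeg (C.g' u) = 1 := by
  rw [inDeg, C.parents_g'u, Set.ncard_singleton]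

lemma parents_g {b : N.V} (hb : b ≠ u) :
    {x : N'.V | N'.Arc x (C.g b)} = C.g '' {a : N.V | N.Arc a b} := by
  ext x
  simp only [Set.mem_setOf_eq, Set.mem_image]
  constructor
  · intro h
    rcases C.arc_in_g h with ⟨a, hab, _, rfl⟩ | ⟨h1, _⟩
    · exact ⟨a, hab, rfl⟩
    · exact absurd h1 hb
  · rintro ⟨a, hab, rfl⟩
    exact (C.harc _ _).2 (Or.inl ⟨a, b, hab, hb, rfl, rfl⟩)

lemma inDeg_g {b : N.V} (hb : b ≠ u) : N'.inDeg (C.g b) = N.inDeg b := by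
  rw [inDeg, C.parents_g hb, Set.ncard_image_of_injective _ C.ginj]; rfl

lemma parents_g' {b : N.V} (hb : N.Reaches u b) (hbu : b ≠ u) :
    {x : N'.V | N'.Arc x (C.g' b)} = C.g' '' {a : N.V | N.Reaches u a ∧ N.Arc a b} := by
  ext x
  simp only [Set.mem_setOf_eq, Set.mem_image]
  constructor
  · intro h
    rcases C.arc_in_g' hb h with ⟨a, ha, hab, rfl⟩ | ⟨h1, _⟩
    · exact ⟨a, ⟨ha, hab⟩, rfl⟩
    · exact absurd h1 hbu
  · rintro ⟨a, ⟨ha, hab⟩, rfl⟩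
    exact (C.harc _ _).2 (Or.inr (Or.inl ⟨a, b, ha, hb, hab, rfl, rfl⟩))

lemma inDeg_g' {b : N.V} (hb : N.Reaches u b) (hbu : b ≠ u) :
    N'.inDeg (C.g' b) ≤ N.inDeg b := by
  rw [inDeg, C.parents_g' hb hbu,
    Set.ncard_image_of_injOn (fun a ha a' ha' h => C.g'inj a a' ha.1 ha'.1 h)]
  exact Set.ncard_le_ncard (fun a ha => ha.2) (N.sfin _)

lemma children_g (a : N.V) :
    {y : N'.V | N'.Arc (C.g a) y} =
      (fun c => if c = u then (if a = C.v₁ then C.g u else C.g' u) else C.g c) ''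
        {c : N.V | N.Arc a c} := by
  ext y
  simp only [Set.mem_setOf_eq, Set.mem_image]
  constructor
  · intro h
    rcases C.arc_out_g h with ⟨b, hab, hbu, rfl⟩ | ⟨rfl, rfl⟩ | ⟨rfl, rfl⟩
    · exact ⟨b, hab, by simp [hbu]⟩
    · exact ⟨u, C.a1, by simp⟩
    · exact ⟨u, C.a2, by simp [C.vne.symm, (Ne.symm C.vne)]⟩
  · rintro ⟨c, hc, rfl⟩
    by_cases hcu : c = u
    · subst hcu
      rcases (C.parents_u a).1 hc with rfl | rfl
      · simp only [if_pos rfl]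
        exact (C.harc _ _).2 (Or.inr (Or.inr (Or.inl ⟨rfl, rfl⟩)))
      · simp only [if_pos rfl, if_neg (Ne.symm C.vne)]
        exact (C.harc _ _).2 (Or.inr (Or.inr (Or.inr ⟨rfl, rfl⟩)))
    · simp only [if_neg hcu]
      exact (C.harc _ _).2 (Or.inl ⟨a, c, hc, hcu, rfl, rfl⟩)

lemma outDeg_g (a : N.V) : N'.outDeg (C.g a) = N.outDeg a := by
  rw [outDeg, C.children_g a, Set.ncard_image_of_injOn ?_]
  · rfl
  · intro c1 _ c2 _ h
    by_cases h1 : c1 = u <;> by_cases h2 : c2 = u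
    · exact h1.trans h2.symm
    · exfalso
      simp only [if_pos h1, if_neg h2] at h
      by_cases hv : a = C.v₁
      · rw [if_pos hv] at h; exact h2 (C.ginj h).symm
      · rw [if_neg hv] at h; exact C.disj c2 u Relation.ReflTransGen.refl h.symm
    · exfalso
      simp only [if_neg h1, if_pos h2] at h
      by_cases hv : a = C.v₁
      · rw [if_pos hv] at h; exact h1 (C.ginj h)
      · rw [if_neg hv] at h; exact C.disj c1 u Relation.ReflTransGen.refl h
    · simp only [if_neg h1, if_neg h2] at h
      exact C.ginj h

lemma children_g' {a : N.V} (ha : N.Reaches u a) :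
    {y : N'.V | N'.Arc (C.g' a) y} = C.g' '' {c : N.V | N.Arc a c} := by
  ext y
  simp only [Set.mem_setOf_eq, Set.mem_image]
  constructor
  · intro h
    obtain ⟨b, _, hab, rfl⟩ := C.arc_out_g' ha h
    exact ⟨b, hab, rfl⟩
  · rintro ⟨c, hc, rfl⟩
    exact (C.harc _ _).2 (Or.inr (Or.inl ⟨a, c, ha, ha.tail hc, hc, rfl, rfl⟩))

lemma outDeg_g' {a : N.V} (ha : N.Reaches u a) : N'.outDeg (C.g' a) = N.outDeg a := by
  rw [outDeg, C.children_g' ha, Set.ncard_image_of_injOn ?_]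
  · rfl
  · exact fun c hc c' hc' h => C.g'inj c c' (ha.tail hc) (ha.tail hc') h

lemma ret_iff {x : N'.V} : N'.IsRet x ↔ ∃ b, N.IsRet b ∧ b ≠ u ∧ x = C.g b := by
  constructor
  · intro hx
    rcases C.vsurj x with ⟨b, rfl⟩ | ⟨b, hb, rfl⟩
    · by_cases hbu : b = u
      · subst hbu; rw [IsRet, C.inDeg_gu] at hx; omega
      · refine ⟨b, ?_, hbu, rfl⟩
        have h1 : N.inDeg b = 2 := by rw [← C.inDeg_g hbu]; exact hx.1
        rcases C.hInv.degcond b with h | h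
        · omega
        · exact h
    · exfalso
      by_cases hbu : b = u
      · subst hbu; rw [IsRet, C.inDeg_g'u] at hx; omega
      · have hnr : ¬ N.IsRet b := fun hr => hbu (C.minret.2 b hr hb)
        have h1 : N.inDeg b ≤ 1 := (C.hInv.degcond b).resolve_right hnr
        have := C.inDeg_g' hb hbu
        have := hx.1
        omega
  · rintro ⟨b, hb, hbu, rfl⟩
    exact ⟨by rw [C.inDeg_g hbu]; exact hb.1, by rw [C.outDeg_g]; exact hb.2⟩

lemma elem_cases {x : N'.V} (hx : N'.IsElem x) :
    x = C.g u ∨ x = C.g' u ∨ (∃ b : N.V, N.IsElem b ∧ x = C.g b) ∨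
      (∃ b : N.V, N.IsElem b ∧ N.Reaches u b ∧ x = C.g' b) := by
  rcases C.vsurj x with ⟨b, rfl⟩ | ⟨b, hb, rfl⟩
  · by_cases hbu : b = u
    · exact Or.inl (congrArg C.g hbu)
    · refine Or.inr (Or.inr (Or.inl ⟨b, ⟨?_, ?_⟩, rfl⟩))
      · rw [← C.inDeg_g hbu]; exact hx.1
      · rw [← C.outDeg_g]; exact hx.2
  · by_cases hbu : b = u
    · exact Or.inr (Or.inl (congrArg C.g' hbu))
    · refine Or.inr (Or.inr (Or.inr ⟨b, ⟨?_, ?_⟩, hb, rfl⟩))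
      · have hnr : ¬ N.IsRet b := fun hr => hbu (C.minret.2 b hr hb)
        exact (C.hInv.degcond b).resolve_right hnr
      · rw [← C.outDeg_g' hb]; exact hx.2

/-- The two elementary nodes of `N'` carrying the label of `u` are the copies of `u`. -/
lemma elem_label {x : N'.V} (hx : N'.IsElem x) (hl : N'.retLabel x = N.retLabel u) :
    x = C.g u ∨ x = C.g' u := by
  rcases C.elem_cases hx with h | h | ⟨b, hb, rfl⟩ | ⟨b, hb, hbr, rfl⟩
  · exact Or.inl h
  · exact Or.inr h
  · exact absurd ((C.retg b) ▸ hl).symm (C.hInv.retElem u b C.minret.1 hb)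
  · exact absurd ((C.retg' b hbr) ▸ hl).symm (C.hInv.retElem u b C.minret.1 hb)

/-- The invariant is preserved by unfolding. -/
lemma inv' : N'.Inv := by
  constructor
  · -- acyclicity via projection
    have hπ : ∃ π : N'.V → N.V, ∀ x y : N'.V, N'.Arc x y → N.Arc (π x) (π y) := by
      classical
      refine ⟨fun x => if h : ∃ a, x = C.g a then h.choose
        else if h2 : ∃ a, N.Reaches u a ∧ x = C.g' a then h2.choose else u, ?_⟩
      have hg : ∀ a : N.V, (fun x => if h : ∃ a, x = C.g a then h.choose
          else if h2 : ∃ a, N.Reaches u a ∧ x = C.g' a then h2.choose else u) (C.g a) = a := by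
        intro a
        have h : ∃ a', C.g a = C.g a' := ⟨a, rfl⟩
        simp only [dif_pos h]
        exact (C.ginj h.choose_spec).symm
      have hg' : ∀ a : N.V, N.Reaches u a →
          (fun x => if h : ∃ a, x = C.g a then h.choose
          else if h2 : ∃ a, N.Reaches u a ∧ x = C.g' a then h2.choose else u) (C.g' a) = a := by
        intro a ha
        have h : ¬ ∃ a', C.g' a = C.g a' := by
          rintro ⟨a', h⟩; exact C.disj a' a ha h.symm
        have h2 : ∃ a', N.Reaches u a' ∧ C.g' a = C.g' a' := ⟨a, ha, rfl⟩
        simp only [dif_neg h, dif_pos h2]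
        exact (C.g'inj h2.choose a h2.choose_spec.1 ha h2.choose_spec.2.symm)
      intro x y h
      rcases (C.harc _ _).1 h with ⟨a, b, hab, hbu, rfl, rfl⟩ |
        ⟨a, b, ha, hb, hab, rfl, rfl⟩ | ⟨rfl, rfl⟩ | ⟨rfl, rfl⟩
      · rw [hg, hg]; exact hab
      · rw [hg' a ha, hg' b hb]; exact hab
      · rw [hg, hg]; exact C.a1
      · rw [hg, hg' u Relation.ReflTransGen.refl]; exact C.a2
    obtain ⟨π, hπ⟩ := hπ
    intro v hv
    exact C.hInv.acyclic (π v) (Relation.TransGen.lift π hπ _ _ hv)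
  · -- degree condition
    intro x
    rcases C.vsurj x with ⟨b, rfl⟩ | ⟨b, hb, rfl⟩
    · by_cases hbu : b = u
      · subst hbu; left; rw [C.inDeg_gu]
      · rcases C.hInv.degcond b with h | h
        · left; rw [C.inDeg_g hbu]; exact h
        · right; exact C.ret_iff.2 ⟨b, h, hbu, rfl⟩
    · by_cases hbu : b = u
      · subst hbu; left; rw [C.inDeg_g'u]
      · left
        have hnr : ¬ N.IsRet b := fun hr => hbu (C.minret.2 b hr hb)
        have := C.inDeg_g' hb hbu
        have := (C.hInv.degcond b).resolve_right hnr
        omega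
  · -- retInj
    intro x y hx hy hl
    obtain ⟨b, hb, hbu, rfl⟩ := C.ret_iff.1 hx
    obtain ⟨b', hb', hbu', rfl⟩ := C.ret_iff.1 hy
    rw [C.retg, C.retg] at hl
    rw [C.hInv.retInj b b' hb hb' hl]
  · -- retElem
    intro x y hx hy
    obtain ⟨b, hb, hbu, rfl⟩ := C.ret_iff.1 hx
    rw [C.retg]
    rcases C.elem_cases hy with rfl | rfl | ⟨c, hc, rfl⟩ | ⟨c, hc, hcr, rfl⟩
    · rw [C.retg]
      exact fun h => hbu (C.hInv.retInj b u hb C.minret.1 h)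
    · rw [C.retg' u Relation.ReflTransGen.refl]
      exact fun h => hbu (C.hInv.retInj b u hb C.minret.1 h)
    · rw [C.retg]; exact C.hInv.retElem b c hb hc
    · rw [C.retg' c hcr]; exact C.hInv.retElem b c hb hc

end UCtx

/-- An embedding of `N₀` onto the non-descendants of `V` in `N'`, under which the
arcs of `N₀` correspond to the `N'`-arcs together with one extra arc `P → W`. -/
structure Cover (N0 N' : IMLN X Λ) (V W P : N'.V) where
  e : N0.V → N'.V
  inj : Function.Injective e
  nreach : ∀ a : N0.V, ¬ N'.Reaches V (e a)
  esurj : ∀ x : N'.V, ¬ N'.Reaches V x → ∃ a, e a = x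
  arc : ∀ a b : N0.V, N0.Arc a b ↔ (N'.Arc (e a) (e b) ∨ (e a = P ∧ e b = W))

namespace Cover

variable {N0 N' : IMLN X Λ} {V W P : N'.V} (C : Cover N0 N' V W P)
  (H1 : ∀ c : N'.V, N'.Arc c V → c = P) (H2 : N'.Arc P V) (H3 : ¬ N'.Arc P W)
  (H4 : ∀ x y : N'.V, ¬ N'.Reaches V x → N'.Arc x y → N'.Reaches V y → (x = P ∧ y = V))
  (H5 : ¬ N'.Reaches V W)
include C H1 H2 H3 H4 H5

lemma outDeg_eq (x : N0.V) : N0.outDeg x = N'.outDeg (C.e x) := by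
  classical
  set S := {y : N'.V | N'.Arc (C.e x) y} with hS
  have hVS : V ∈ S ↔ C.e x = P := by
    constructor
    · exact fun h => H1 _ h
    · rintro h; rw [hS]; simpa [h] using H2
  have himg : C.e '' {y : N0.V | N0.Arc x y} =
      if C.e x = P then (S \ {V}) ∪ {W} else S := by
    split_ifs with hP
    · ext c
      constructor
      · rintro ⟨y, hy, rfl⟩
        rcases (C.arc x y).1 hy with h | ⟨_, h2⟩
        · exact Or.inl ⟨h, fun hc => C.nreach y
            (by rw [Set.mem_singleton_iff] at hc; rw [hc]; exact Relation.ReflTransGen.refl)⟩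
        · exact Or.inr (by simp [h2])
      · rintro (⟨hc, hcV⟩ | hc)
        · have hnr : ¬ N'.Reaches V c := by
            intro hr
            exact hcV (by simp [(H4 (C.e x) c (C.nreach x) hc hr).2])
          obtain ⟨a, rfl⟩ := C.esurj c hnr
          exact ⟨a, (C.arc x a).2 (Or.inl hc), rfl⟩
        · rw [Set.mem_singleton_iff] at hc
          obtain ⟨a, rfl⟩ := C.esurj c (hc ▸ H5)
          exact ⟨a, (C.arc x a).2 (Or.inr ⟨hP, hc⟩), rfl⟩
    · ext c
      constructor
      · rintro ⟨y, hy, rfl⟩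
        rcases (C.arc x y).1 hy with h | ⟨h1, _⟩
        · exact h
        · exact absurd h1 hP
      · intro hc
        have hnr : ¬ N'.Reaches V c := by
          intro hr
          exact hP (H4 (C.e x) c (C.nreach x) hc hr).1
        obtain ⟨a, rfl⟩ := C.esurj c hnr
        exact ⟨a, (C.arc x a).2 (Or.inl hc), rfl⟩
  have h1 : N0.outDeg x = (C.e '' {y : N0.V | N0.Arc x y}).ncard :=
    (Set.ncard_image_of_injective _ C.inj).symm
  rw [h1, himg]
  split_ifs with hP
  · have hWn : W ∉ S \ {V} := by
      rintro ⟨hW, _⟩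
      exact H3 (hP ▸ hW)
    rw [Set.union_singleton, Set.ncard_insert_of_notMem hWn (Set.Finite.diff (N'.sfin S))]
    rw [Set.ncard_diff_singleton_add_one (hVS.2 hP) (N'.sfin S)]
    rfl
  · rfl

end Cover

/-- Two covers of the same region of `N'` give isomorphic networks. -/
lemma isom_of_covers {M N0 N' : IMLN X Λ} {V W P : N'.V}
    (H1 : ∀ c : N'.V, N'.Arc c V → c = P) (H2 : N'.Arc P V) (H3 : ¬ N'.Arc P W)
    (H4 : ∀ x y : N'.V, ¬ N'.Reaches V x → N'.Arc x y → N'.Reaches V y → (x = P ∧ y = V))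
    (H5 : ¬ N'.Reaches V W)
    (CM : Cover M N' V W P) (CN : Cover N0 N' V W P)
    (hleafM : ∀ x : M.V, N'.IsLeaf (CM.e x) → M.leafLabel x = N'.leafLabel (CM.e x))
    (hretM : ∀ x : M.V, N'.outDeg (CM.e x) = 1 → M.retLabel x = N'.retLabel (CM.e x))
    (hleafN : ∀ a : N0.V, N'.leafLabel (CN.e a) = N0.leafLabel a)
    (hretN : ∀ a : N0.V, N'.retLabel (CN.e a) = N0.retLabel a) :
    Isom M N0 := by
  classical
  have hex : ∀ x : M.V, ∃ a : N0.V, CN.e a = CM.e x :=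
    fun x => CN.esurj _ (CM.nreach x)
  set f : M.V → N0.V := fun x => (hex x).choose with hf
  have hfe : ∀ x : M.V, CN.e (f x) = CM.e x := fun x => (hex x).choose_spec
  have hfbij : Function.Bijective f := by
    constructor
    · intro x y h
      apply CM.inj
      rw [← hfe x, ← hfe y, h]
    · intro a
      obtain ⟨x, hx⟩ := CM.esurj _ (CN.nreach a)
      exact ⟨x, CN.inj (by rw [hfe x, hx])⟩
  refine ⟨Equiv.ofBijective f hfbij, ?_, ?_, ?_⟩
  · intro x y
    rw [CM.arc, CN.arc]
    simp only [Equiv.ofBijective_apply, hfe]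
  · intro v hv
    have hdeg := (CM.outDeg_eq H1 H2 H3 H4 H5 v).symm.trans hv
    have h2 := hleafM v hdeg
    simp only [Equiv.ofBijective_apply, Equiv.refl_apply]
    rw [h2, ← hfe v, hleafN]
  · intro v hv
    have hdeg : N'.outDeg (CM.e v) = 1 := by
      rw [← CM.outDeg_eq H1 H2 H3 H4 H5 v]
      rcases hv with h | h
      · exact h.2
      · exact h.2
    have h2 := hretM v hdeg
    simp only [Equiv.ofBijective_apply, Equiv.refl_apply]
    rw [h2, ← hfe v, hretN]

lemma isom_refl (N : IMLN X Λ) : Isom N N := by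
  refine ⟨Equiv.refl N.V, ?_, ?_, ?_⟩ <;> simp

lemma isom_reaches {A B : IMLN X Λ} (φ : A.V ≃ B.V)
    (h : ∀ a b : A.V, A.Arc a b ↔ B.Arc (φ a) (φ b)) {a b : A.V} :
    A.Reaches a b ↔ B.Reaches (φ a) (φ b) := by
  constructor
  · exact fun hr => Relation.ReflTransGen.lift φ (fun a b hab => (h a b).1 hab) _ _ hr
  · intro hr
    have := Relation.ReflTransGen.lift φ.symm
      (fun x y hxy => (h _ _).2 (by simpa using hxy)) _ _ hr
    simpa [Function.onFun, Reaches] using this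

lemma isom_outDeg {A B : IMLN X Λ} (φ : A.V ≃ B.V)
    (h : ∀ a b : A.V, A.Arc a b ↔ B.Arc (φ a) (φ b)) (a : A.V) :
    A.outDeg a = B.outDeg (φ a) := by
  have : {y : B.V | B.Arc (φ a) y} = φ '' {y : A.V | A.Arc a y} := by
    ext y
    simp only [Set.mem_setOf_eq, Set.mem_image]
    constructor
    · intro hy
      exact ⟨φ.symm y, (h _ _).2 (by simpa using hy), by simp⟩
    · rintro ⟨c, hc, rfl⟩
      exact (h _ _).1 hc
  rw [outDeg, outDeg, this, Set.ncard_image_of_injective _ φ.injective]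

lemma isom_inDeg {A B : IMLN X Λ} (φ : A.V ≃ B.V)
    (h : ∀ a b : A.V, A.Arc a b ↔ B.Arc (φ a) (φ b)) (a : A.V) :
    A.inDeg a = B.inDeg (φ a) := by
  have : {y : B.V | B.Arc y (φ a)} = φ '' {y : A.V | A.Arc y a} := by
    ext y
    simp only [Set.mem_setOf_eq, Set.mem_image]
    constructor
    · intro hy
      exact ⟨φ.symm y, (h _ _).2 (by simpa using hy), by simp⟩
    · rintro ⟨c, hc, rfl⟩
      exact (h _ _).1 hc
  rw [inDeg, inDeg, this, Set.ncard_image_of_injective _ φ.injective]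

namespace UCtx

variable {N N' : IMLN X Λ} {u : N.V} (C : UCtx N N' u)
include C
attribute [local instance] Classical.propDecidable

/-! Case A: the deleted copy is `g' u`, the kept copy is `g u`. -/

lemma H1A : ∀ c : N'.V, N'.Arc c (C.g' u) → c = C.g C.v₂ := by
  intro c hc
  have := C.parents_g'u
  rw [Set.ext_iff] at this
  simpa using (this c).1 hc

lemma H2A : N'.Arc (C.g C.v₂) (C.g' u) :=
  (C.harc _ _).2 (Or.inr (Or.inr (Or.inr ⟨rfl, rfl⟩)))

lemma H3A : ¬ N'.Arc (C.g C.v₂) (C.g u) := by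
  intro h
  rcases C.arc_out_g h with ⟨b, _, hbu, hgb⟩ | ⟨h1, _⟩ | ⟨_, h2⟩
  · exact hbu (C.ginj hgb).symm
  · exact C.vne h1.symm
  · exact C.gu_ne_g'u h2

lemma H4A : ∀ x y : N'.V, ¬ N'.Reaches (C.g' u) x → N'.Arc x y → N'.Reaches (C.g' u) y →
    (x = C.g C.v₂ ∧ y = C.g' u) := by
  intro x y hx hxy hy
  obtain ⟨b, hb, rfl⟩ := C.desc_g' hy
  rcases C.arc_in_g' hb hxy with ⟨a, ha, _, rfl⟩ | ⟨rfl, rfl⟩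
  · exact absurd (C.reach_g' ha) hx
  · exact ⟨rfl, rfl⟩

lemma H5A : ¬ N'.Reaches (C.g' u) (C.g u) := by
  intro h
  obtain ⟨a, ha, hgu⟩ := C.desc_g' h
  exact C.disj u a ha hgu

/-- The cover of `N` itself inside `N'`, case A. -/
def coverA : Cover N N' (C.g' u) (C.g u) (C.g C.v₂) where
  e := C.g
  inj := C.ginj
  nreach := by
    intro a h
    obtain ⟨b, hb, hgb⟩ := C.desc_g' h
    exact C.disj a b hb hgb
  esurj := by
    intro x hx
    rcases C.vsurj x with ⟨a, rfl⟩ | ⟨a, ha, rfl⟩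
    · exact ⟨a, rfl⟩
    · exact absurd (C.reach_g' ha) hx
  arc := by
    intro a b
    constructor
    · intro h
      by_cases hbu : b = u
      · subst hbu
        rcases (C.parents_u a).1 h with rfl | rfl
        · exact Or.inl ((C.harc _ _).2 (Or.inr (Or.inr (Or.inl ⟨rfl, rfl⟩))))
        · exact Or.inr ⟨rfl, rfl⟩
      · exact Or.inl ((C.harc _ _).2 (Or.inl ⟨a, b, h, hbu, rfl, rfl⟩))
    · rintro (h | ⟨h1, h2⟩)
      · rcases C.arc_out_g h with ⟨c, hac, _, hgb⟩ | ⟨rfl, hgb⟩ | ⟨rfl, hgb⟩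
        · rw [C.ginj hgb]; exact hac
        · rw [C.ginj hgb]; exact C.a1
        · exact absurd hgb (C.disj b u Relation.ReflTransGen.refl)
      · rw [C.ginj h1, C.ginj h2]; exact C.a2

/-! Case B: the deleted copy is `g u`, the kept copy is `g' u`. -/

lemma H1B : ∀ c : N'.V, N'.Arc c (C.g u) → c = C.g C.v₁ := by
  intro c hc
  have := C.parents_gu
  rw [Set.ext_iff] at this
  simpa using (this c).1 hc

lemma H2B : N'.Arc (C.g C.v₁) (C.g u) :=
  (C.harc _ _).2 (Or.inr (Or.inr (Or.inl ⟨rfl, rfl⟩)))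

lemma H3B : ¬ N'.Arc (C.g C.v₁) (C.g' u) := by
  intro h
  rcases C.arc_out_g h with ⟨b, _, hbu, hgb⟩ | ⟨_, h2⟩ | ⟨h1, _⟩
  · exact C.disj b u Relation.ReflTransGen.refl hgb.symm
  · exact C.gu_ne_g'u h2.symm
  · exact C.vne h1

lemma H4B : ∀ x y : N'.V, ¬ N'.Reaches (C.g u) x → N'.Arc x y → N'.Reaches (C.g u) y →
    (x = C.g C.v₁ ∧ y = C.g u) := by
  intro x y hx hxy hy
  obtain ⟨b, hb, rfl⟩ := C.desc_g hy
  rcases C.arc_in_g hxy with ⟨a, hab, hbu, rfl⟩ | ⟨rfl, rfl⟩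
  · by_cases hra : N.Reaches u a
    · exact absurd (C.reach_g hra) hx
    · exact absurd (C.crossing hab hb hra) hbu
  · exact ⟨rfl, rfl⟩

lemma H5B : ¬ N'.Reaches (C.g u) (C.g' u) := by
  intro h
  obtain ⟨a, _, hgu⟩ := C.desc_g h
  exact C.disj a u Relation.ReflTransGen.refl hgu.symm

lemma eB_gv1 {a : N.V}
    (h : (if N.Reaches u a then C.g' a else C.g a) = C.g C.v₁) : a = C.v₁ := by
  by_cases hra : N.Reaches u a
  · rw [if_pos hra] at h
    exact absurd h (C.disj C.v₁ a hra).symm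
  · rw [if_neg hra] at h
    exact C.ginj h

lemma eB_g'u {b : N.V}
    (h : (if N.Reaches u b then C.g' b else C.g b) = C.g' u) : b = u := by
  by_cases hrb : N.Reaches u b
  · rw [if_pos hrb] at h
    exact C.g'inj b u hrb Relation.ReflTransGen.refl h
  · rw [if_neg hrb] at h
    exact absurd h (C.disj b u Relation.ReflTransGen.refl)

/-- The cover of `N` itself inside `N'`, case B. -/
noncomputable def coverB : Cover N N' (C.g u) (C.g' u) (C.g C.v₁) where
  e := fun a => if N.Reaches u a then C.g' a else C.g a
  inj := by
    intro a b h
    by_cases hra : N.Reaches u a <;> by_cases hrb : N.Reaches u b <;>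
      simp only [if_pos, if_neg, hra, hrb, if_true, if_false] at h
    · exact C.g'inj a b hra hrb h
    · exact absurd h.symm (C.disj b a hra)
    · exact absurd h (C.disj a b hrb)
    · exact C.ginj h
  nreach := by
    intro a h
    by_cases hra : N.Reaches u a
    · simp only [if_pos hra] at h
      obtain ⟨b, hb, hgb⟩ := C.desc_g h
      exact C.disj b a hra hgb.symm
    · simp only [if_neg hra] at h
      obtain ⟨b, hb, hgb⟩ := C.desc_g h
      exact hra ((C.ginj hgb) ▸ hb)
  esurj := by
    intro x hx
    rcases C.vsurj x with ⟨a, rfl⟩ | ⟨a, ha, rfl⟩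
    · by_cases hra : N.Reaches u a
      · exact absurd (C.reach_g hra) hx
      · exact ⟨a, by simp only [if_neg hra]⟩
    · exact ⟨a, by simp only [if_pos ha]⟩
  arc := by
    intro a b
    constructor
    · intro h
      by_cases hra : N.Reaches u a
      · have hrb : N.Reaches u b := hra.tail h
        simp only [if_pos hra, if_pos hrb]
        exact Or.inl ((C.harc _ _).2 (Or.inr (Or.inl ⟨a, b, hra, hrb, h, rfl, rfl⟩)))
      · by_cases hrb : N.Reaches u b
        · have hbu : b = u := C.crossing h hrb hra
          subst hbu
          rcases (C.parents_u a).1 h with rfl | rfl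
          · simp [if_neg hra, if_pos hrb]
          · simp only [if_neg hra, if_pos hrb]
            exact Or.inl ((C.harc _ _).2 (Or.inr (Or.inr (Or.inr ⟨rfl, rfl⟩))))
        · have hbu : b ≠ u := fun hb => hrb (hb ▸ Relation.ReflTransGen.refl)
          simp only [if_neg hra, if_neg hrb]
          exact Or.inl ((C.harc _ _).2 (Or.inl ⟨a, b, h, hbu, rfl, rfl⟩))
    · rintro (h | ⟨h1, h2⟩)
      · by_cases hra : N.Reaches u a <;> by_cases hrb : N.Reaches u b <;>
          simp only [if_pos, if_neg, hra, hrb, if_true, if_false] at h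
        · obtain ⟨c, hc, hac, heq⟩ := C.arc_out_g' hra h
          rw [C.g'inj b c hrb hc heq]
          exact hac
        · obtain ⟨c, hc, _, heq⟩ := C.arc_out_g' hra h
          exact absurd heq (C.disj b c hc)
        · rcases C.arc_out_g h with ⟨c, _, _, heq⟩ | ⟨rfl, heq⟩ | ⟨rfl, heq⟩
          · exact absurd heq (C.disj c b hrb).symm
          · exact absurd heq (C.disj u b hrb).symm
          · rw [C.g'inj b u hrb Relation.ReflTransGen.refl heq]
            exact C.a2
        · rcases C.arc_out_g h with ⟨c, hac, hcu, heq⟩ | ⟨rfl, heq⟩ | ⟨rfl, heq⟩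
          · rw [C.ginj heq]; exact hac
          · exact absurd ((C.ginj heq) ▸ Relation.ReflTransGen.refl) hrb
          · exact absurd heq (C.disj b u Relation.ReflTransGen.refl)
      · rw [C.eB_gv1 h1, C.eB_g'u h2]
        exact C.a1

end UCtx

/-- Generic form of the cancellation lemma. -/
lemma cancel_aux {N Mid M N' : IMLN X Λ} {V W P : N'.V}
    (hInv' : N'.Inv)
    (H1 : ∀ c : N'.V, N'.Arc c V → c = P) (H2 : N'.Arc P V) (H3 : ¬ N'.Arc P W)
    (H4 : ∀ x y : N'.V, ¬ N'.Reaches V x → N'.Arc x y → N'.Reaches V y → (x = P ∧ y = V))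
    (H5 : ¬ N'.Reaches V W)
    (CN : Cover N N' V W P)
    (hleafN : ∀ a : N.V, N'.leafLabel (CN.e a) = N.leafLabel a)
    (hretN : ∀ a : N.V, N'.retLabel (CN.e a) = N.retLabel a)
    (φ : Mid.V ≃ N'.V) (hφarc : ∀ a b : Mid.V, Mid.Arc a b ↔ N'.Arc (φ a) (φ b))
    (hφleaf : ∀ z : Mid.V, Mid.IsLeaf z → Mid.leafLabel z = N'.leafLabel (φ z))
    (hφret : ∀ z : Mid.V, Mid.IsRet z ∨ Mid.IsElem z → Mid.retLabel z = N'.retLabel (φ z))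
    {w v : Mid.V} (hφw : φ w = W) (hφv : φ v = V)
    {vp : Mid.V} (hvp : Mid.Arc vp v)
    (h : M.V → Mid.V) (hinj : Function.Injective h)
    (hnd : ∀ x : M.V, ¬ Mid.Reaches v (h x))
    (hsurj : ∀ a : Mid.V, ¬ Mid.Reaches v a → ∃ x, h x = a)
    (hlf : ∀ x : M.V, M.leafLabel x = Mid.leafLabel (h x))
    (hrt : ∀ x : M.V, M.retLabel x = Mid.retLabel (h x))
    (harc2 : ∀ x y : M.V, M.Arc x y ↔ (Mid.Arc (h x) (h y) ∨ (h x = vp ∧ h y = w))) :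
    Isom M N := by
  have hφvp : φ vp = P := H1 _ (by rw [← hφv]; exact (hφarc _ _).1 hvp)
  refine isom_of_covers H1 H2 H3 H4 H5 ⟨fun x => φ (h x), ?_, ?_, ?_, ?_⟩ CN ?_ ?_ hleafN hretN
  · exact fun a b hab => hinj (φ.injective hab)
  · intro a hr
    exact hnd a ((isom_reaches φ hφarc).2 (by rw [hφv]; exact hr))
  · intro x hx
    have hnr : ¬ Mid.Reaches v (φ.symm x) := by
      intro hr
      apply hx
      have := (isom_reaches φ hφarc).1 hr
      rw [hφv] at this
      simpa using this
    obtain ⟨a, ha⟩ := hsurj (φ.symm x) hnr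
    exact ⟨a, by show φ (h a) = x; rw [ha]; simp⟩
  · intro a b
    rw [harc2]
    constructor
    · rintro (hab | ⟨e1, e2⟩)
      · exact Or.inl ((hφarc _ _).1 hab)
      · exact Or.inr ⟨by show φ (h a) = P; rw [e1, hφvp], by show φ (h b) = W; rw [e2, hφw]⟩
    · rintro (hab | ⟨e1, e2⟩)
      · exact Or.inl ((hφarc _ _).2 hab)
      · refine Or.inr ⟨φ.injective (e1.trans hφvp.symm), φ.injective (e2.trans hφw.symm)⟩
  · intro x hl
    rw [hlf x]
    exact hφleaf (h x) (by rw [IsLeaf, isom_outDeg φ hφarc]; exact hl)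
  · intro x hd
    rw [hrt x]
    apply hφret
    have hod : Mid.outDeg (h x) = 1 := by rw [isom_outDeg φ hφarc]; exact hd
    rcases hInv'.degcond (φ (h x)) with hle | hret
    · exact Or.inr ⟨by rw [isom_inDeg φ hφarc]; exact hle, hod⟩
    · exact Or.inl ⟨by rw [isom_inDeg φ hφarc]; exact hret.1, hod⟩

/-- Unfolding at `u` and then folding at (any node labelled with) the label of `u`
recovers `N`. -/
lemma UCtx.cancel {N N' Mid M : IMLN X Λ} {u : N.V} (C : UCtx N N' u)
    (hIso : Isom Mid N') {w : Mid.V} (hw : Mid.retLabel w = N.retLabel u)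
    (hfold : IsFoldAt Mid M w) : Isom M N := by
  classical
  obtain ⟨φ, hφarc, hφleaf0, hφret0⟩ := hIso
  have hφleaf : ∀ z : Mid.V, Mid.IsLeaf z → Mid.leafLabel z = N'.leafLabel (φ z) :=
    fun z hz => by simpa using hφleaf0 z hz
  have hφret : ∀ z : Mid.V, Mid.IsRet z ∨ Mid.IsElem z →
      Mid.retLabel z = N'.retLabel (φ z) := fun z hz => by simpa using hφret0 z hz
  obtain ⟨hEw, v, hvw, hEv, hlab, -, vp, hvp, h, hinj, hnd, hsurj, -, hlf, hrt, harc2⟩ := hfold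
  have hwe : Mid.IsElem w := hEw.1
  have hve : Mid.IsElem v := hEv.1
  have helem : ∀ z : Mid.V, Mid.IsElem z → N'.IsElem (φ z) := by
    intro z hz
    exact ⟨by rw [← isom_inDeg φ hφarc]; exact hz.1,
      by rw [← isom_outDeg φ hφarc]; exact hz.2⟩
  have hφw : φ w = C.g u ∨ φ w = C.g' u :=
    C.elem_label (helem w hwe) (by rw [← hφret w (Or.inr hwe), hw])
  have hφv : φ v = C.g u ∨ φ v = C.g' u :=
    C.elem_label (helem v hve) (by rw [← hφret v (Or.inr hve), hlab, hw])
  have hφvw : φ v ≠ φ w := fun hh => hvw (φ.injective hh)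
  rcases hφv with hv' | hv' <;> rcases hφw with hw' | hw'
  · exact absurd (hv'.trans hw'.symm) hφvw
  · -- case B : deleted copy V = g u
    exact cancel_aux C.inv' C.H1B C.H2B C.H3B C.H4B C.H5B C.coverB
      (fun a => by
        show N'.leafLabel (if N.Reaches u a then C.g' a else C.g a) = N.leafLabel a
        split_ifs with hr
        · exact C.leafg' a hr
        · exact C.leafg a)
      (fun a => by
        show N'.retLabel (if N.Reaches u a then C.g' a else C.g a) = N.retLabel a
        split_ifs with hr
        · exact C.retg' a hr
        · exact C.retg a)
      φ hφarc hφleaf hφret hw' hv' hvp h hinj hnd hsurj hlf hrt harc2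
  · -- case A : deleted copy V = g' u
    exact cancel_aux C.inv' C.H1A C.H2A C.H3A C.H4A C.H5A C.coverA
      (fun a => C.leafg a) (fun a => C.retg a)
      φ hφarc hφleaf hφret hw' hv' hvp h hinj hnd hsurj hlf hrt harc2
  · exact absurd (hv'.trans hw'.symm) hφvw

lemma foldSeq_nil_eq {A B : IMLN X Λ} (h : IsFoldSeq A [] B) : A = B := by
  cases h; rfl

lemma foldSeq_append {A B : IMLN X Λ} {l1 l2 : List Λ} (h : IsFoldSeq A (l1 ++ l2) B) :
    ∃ C : IMLN X Λ, IsFoldSeq A l1 C ∧ IsFoldSeq C l2 B := by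
  induction l1 generalizing A with
  | nil => exact ⟨A, IsFoldSeq.nil A, h⟩
  | cons l ls ih =>
      cases h with
      | cons hstep hrest =>
          obtain ⟨D, h1, h2⟩ := ih hrest
          exact ⟨D, IsFoldSeq.cons hstep h1, h2⟩

/-- Main induction: unfolding along `ls` and folding back along `ls.reverse`
recovers the original network, up to isomorphism. -/
lemma fold_unfold_main : ∀ (ls : List Λ) (N T M : IMLN X Λ), N.Inv →
    IsUnfoldSeq N ls T → IsFoldSeq T ls.reverse M → Isom M N := by
  intro ls
  induction ls with
  | nil =>
      intro N T M _ hT hM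
      cases hT
      rw [List.reverse_nil] at hM
      rw [← foldSeq_nil_eq hM]
      exact isom_refl N
  | cons l ls ih =>
      intro N T M hInv hT hM
      cases hT with
      | @cons _ N1 _ _ _ hstep hrest =>
          rw [List.reverse_cons] at hM
          obtain ⟨Mid, hMid, hlast⟩ := foldSeq_append hM
          cases hlast with
          | @cons _ M2 _ _ _ hfold hnil =>
              obtain ⟨w, hwlab, hfoldat⟩ := hfold
              have hM2 : M2 = M := foldSeq_nil_eq hnil
              subst hM2
              obtain ⟨u, humin, hulab, hunf⟩ := hstep
              obtain ⟨g, g', ginj, g'inj, disj, vsurj, -, leafg, retg, leafg', retg',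
                v₁, v₂, vne, a1, a2, harc⟩ := hunf
              have C : UCtx N N1 u :=
                ⟨g, g', v₁, v₂, hInv, humin, ginj, g'inj, disj, vsurj,
                  leafg, retg, leafg', retg', vne, a1, a2, harc⟩
              have hIso := ih N1 T Mid C.inv' hrest hMid
              exact C.cancel hIso (hwlab.trans hulab.symm) hfoldat

end IMLN

theorem fold_of_unfolding_aux (X Λ : Type) (N : IMLN X Λ) (hN : N.IsILPN)
    (us : List N.V)
    (T : IMLN X Λ) (hT : IMLN.IsUnfoldSeq N (us.map N.retLabel) T)
    (M : IMLN X Λ) (hM : IMLN.IsFoldSeq T ((us.map N.retLabel).reverse) M) :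
    IMLN.Isom M N :=
  IMLN.fold_unfold_main _ N T M (IMLN.Inv.of_ilpn hN) hT hM

/-- **Corollary (fu).** Let `N` be an internally labelled phylogenetic network.
Then `N = F(U(N))`: unfolding `N` along a compatible sequence consisting of all
its reticulation nodes and then folding back (in reverse order) recovers `N`,
up to isomorphism. -/
theorem IMLN.fold_of_unfolding (X Λ : Type) (N : IMLN X Λ) (hN : N.IsILPN)
    (us : List N.V) (hnd : us.Nodup) (hall : ∀ u : N.V, N.IsRet u ↔ u ∈ us)
    (T : IMLN X Λ) (hT : IMLN.IsUnfoldSeq N (us.map N.retLabel) T)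
    (M : IMLN X Λ) (hM : IMLN.IsFoldSeq T ((us.map N.retLabel).reverse) M) :
    IMLN.Isom M N :=
  IMLN.fold_unfold_main _ N T M (IMLN.Inv.of_ilpn hN) hT hM
end

section
/- Let N be an IMLN. Then, for any node u of N, the polynomial p(u) ∈ ℤ[x_1,…,x_n,λ_1,…,λ_r,y] is irreducible if and only if u is a tree node. -/
namespace IrrAux

open MvPolynomial

variable {σ : Type}

/-- Grading homomorphism: sends `X i` to `C (X i) * t ^ w i`. -/
noncomputable def grad (w : σ → ℕ) : MvPolynomial σ ℤ →+* Polynomial (MvPolynomial σ ℤ) :=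
  MvPolynomial.eval₂Hom (Polynomial.C.comp MvPolynomial.C)
    (fun i => Polynomial.C (MvPolynomial.X i) * Polynomial.X ^ w i)

/-- weighted degree of an exponent vector -/
def wdeg (w : σ → ℕ) (e : σ →₀ ℕ) : ℕ := e.sum fun i k => w i * k

lemma wdeg_zero (w : σ → ℕ) : wdeg w 0 = 0 := Finsupp.sum_zero_index

lemma wdeg_add (w : σ → ℕ) (d e : σ →₀ ℕ) : wdeg w (d + e) = wdeg w d + wdeg w e :=
  Finsupp.sum_add_index' (fun i => mul_zero _) (fun i k l => mul_add _ k l)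

lemma wdeg_single (w : σ → ℕ) (i : σ) (k : ℕ) : wdeg w (Finsupp.single i k) = w i * k :=
  Finsupp.sum_single_index (mul_zero _)

lemma wdeg_one_eq_zero {e : σ →₀ ℕ} (h : wdeg (fun _ => 1) e = 0) : e = 0 := by
  classical
  ext i
  by_cases hi : i ∈ e.support
  · have := Finset.sum_eq_zero_iff.mp h i hi
    simpa using this
  · simpa using Finsupp.notMem_support_iff.mp hi

open Classical in
noncomputable def wy (y : σ) : σ → ℕ := fun i => if i = y then 1 else 0

lemma wdeg_wy (y : σ) (e : σ →₀ ℕ) : wdeg (wy y) e = e y := by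
  unfold wdeg
  rw [Finsupp.sum]
  rw [Finset.sum_eq_single y (fun b _ hb => by simp [wy, hb])
    (fun hy => by simp [wy, Finsupp.notMem_support_iff.mp hy])]
  simp [wy]

lemma grad_X (w : σ → ℕ) (i : σ) :
    grad w (MvPolynomial.X i) = Polynomial.C (MvPolynomial.X i) * Polynomial.X ^ w i := by
  simp [grad]

lemma grad_monomial (w : σ → ℕ) (e : σ →₀ ℕ) (c : ℤ) :
    grad w (monomial e c) = Polynomial.C (monomial e c) * Polynomial.X ^ wdeg w e := by
  classical
  have h1 : ∀ i k, (Polynomial.C (MvPolynomial.X i) * Polynomial.X ^ w i) ^ k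
      = Polynomial.C ((MvPolynomial.X i : MvPolynomial σ ℤ) ^ k) * Polynomial.X ^ (w i * k) := by
    intro i k
    rw [mul_pow, ← map_pow, ← pow_mul]
  rw [grad, coe_eval₂Hom, eval₂_monomial]
  simp only [RingHom.comp_apply, h1]
  rw [Finsupp.prod, Finset.prod_mul_distrib, ← map_prod, Finset.prod_pow_eq_pow_sum]
  rw [monomial_eq, Finsupp.prod, ← mul_assoc, ← map_mul]
  rfl

lemma coeff_coeff_grad (w : σ → ℕ) (f : MvPolynomial σ ℤ) (n : ℕ) (e : σ →₀ ℕ) :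
    MvPolynomial.coeff e ((grad w f).coeff n)
      = if wdeg w e = n then MvPolynomial.coeff e f else 0 := by
  classical
  induction f using MvPolynomial.induction_on' with
  | monomial u c =>
    rw [grad_monomial, Polynomial.coeff_C_mul, Polynomial.coeff_X_pow]
    by_cases h1 : n = wdeg w u
    · rw [if_pos h1, mul_one]
      by_cases h2 : u = e
      · subst h2
        rw [if_pos (by omega)]
      · rw [MvPolynomial.coeff_monomial, if_neg h2]
        split <;> simp [MvPolynomial.coeff_monomial, h2]
    · rw [if_neg h1, mul_zero]
      rw [MvPolynomial.coeff_zero]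
      by_cases h2 : wdeg w e = n
      · rw [if_pos h2, MvPolynomial.coeff_monomial]
        have : ¬ u = e := by rintro rfl; exact h1 (by omega)
        rw [if_neg this]
      · rw [if_neg h2]
  | add p q hp hq =>
    simp only [map_add, Polynomial.coeff_add, MvPolynomial.coeff_add, hp, hq]
    split <;> simp

lemma grad_ne_zero {f : MvPolynomial σ ℤ} (w : σ → ℕ) (h : f ≠ 0) : grad w f ≠ 0 := by
  obtain ⟨e, he⟩ := MvPolynomial.ne_zero_iff.mp h
  intro hz
  have := coeff_coeff_grad w f (wdeg w e) e
  rw [hz, if_pos rfl] at this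
  simp only [Polynomial.coeff_zero, MvPolynomial.coeff_zero] at this
  exact he this.symm

lemma le_natDegree_grad {f : MvPolynomial σ ℤ} (w : σ → ℕ) {e : σ →₀ ℕ}
    (h : MvPolynomial.coeff e f ≠ 0) : wdeg w e ≤ (grad w f).natDegree := by
  apply Polynomial.le_natDegree_of_ne_zero
  intro hz
  have := coeff_coeff_grad w f (wdeg w e) e
  rw [hz, if_pos rfl] at this
  simp only [MvPolynomial.coeff_zero] at this
  exact h this.symm

lemma eq_C_of (f : MvPolynomial σ ℤ) (h : ∀ e, MvPolynomial.coeff e f ≠ 0 → e = 0) :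
    f = MvPolynomial.C (MvPolynomial.coeff 0 f) := by
  classical
  apply MvPolynomial.ext
  intro e
  by_cases he : e = 0
  · subst he
    rw [MvPolynomial.coeff_C, if_pos rfl]
  · rw [MvPolynomial.coeff_C, if_neg (Ne.symm he)]
    by_contra hne
    exact he (h e hne)

lemma eq_C_of_natDegree_grad_eq_zero (f : MvPolynomial σ ℤ)
    (h : (grad (fun _ => 1) f).natDegree = 0) :
    f = MvPolynomial.C (MvPolynomial.coeff 0 f) := by
  apply eq_C_of
  intro e he
  have := le_natDegree_grad (fun _ => 1) he
  rw [h, Nat.le_zero] at this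
  exact wdeg_one_eq_zero this



/-- The invariant maintained by all node polynomials. -/
def Good (y : σ) (f : MvPolynomial σ ℤ) : Prop :=
  ∃ d D : σ →₀ ℕ, d ≠ 0 ∧ d y = 0 ∧ (grad (wy y) f).coeff 0 = monomial d 1 ∧
    D y = 0 ∧ (grad (fun _ => 1) f).leadingCoeff = monomial D 1 ∧
    1 ≤ (grad (fun _ => 1) f).natDegree

lemma Good.ne_zero {y : σ} {f : MvPolynomial σ ℤ} (hf : Good y f) : f ≠ 0 := by
  obtain ⟨d, D, hd0, hdy, hdf, -, -, -⟩ := hf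
  rintro rfl
  rw [map_zero] at hdf
  simp only [Polynomial.coeff_zero] at hdf
  have h1 : (1 : ℤ) = 0 := MvPolynomial.monomial_eq_zero.mp hdf.symm
  exact one_ne_zero h1

lemma Good.coeff_zero_eq {y : σ} {f : MvPolynomial σ ℤ} (hf : Good y f) :
    MvPolynomial.coeff 0 f = 0 := by
  classical
  obtain ⟨d, D, hd0, hdy, hdf, -, -, -⟩ := hf
  have h := coeff_coeff_grad (wy y) f 0 0
  rw [if_pos (by rw [wdeg_zero]), hdf, MvPolynomial.coeff_monomial, if_neg hd0] at h
  exact h.symm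

lemma good_X {y x : σ} (hx : x ≠ y) : Good y (MvPolynomial.X x) := by
  classical
  have hX : (MvPolynomial.X x : MvPolynomial σ ℤ) = monomial (Finsupp.single x 1) 1 := rfl
  refine ⟨Finsupp.single x 1, Finsupp.single x 1, ?_, ?_, ?_, ?_, ?_, ?_⟩
  · exact fun h => one_ne_zero (Finsupp.single_eq_zero.mp h)
  · rw [Finsupp.single_apply, if_neg hx]
  · rw [grad_X]
    have : wy y x = 0 := by simp [wy, hx]
    rw [this, pow_zero, mul_one, Polynomial.coeff_C_zero, hX]
  · rw [Finsupp.single_apply, if_neg hx]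
  · rw [grad_X, Polynomial.C_mul_X_pow_eq_monomial, Polynomial.leadingCoeff_monomial, hX]
  · rw [grad_X, Polynomial.C_mul_X_pow_eq_monomial,
      Polynomial.natDegree_monomial_eq _ (MvPolynomial.X_ne_zero x)]

lemma Good.mul_X {y : σ} {f : MvPolynomial σ ℤ} (hf : Good y f) {i : σ} (hi : i ≠ y) :
    Good y (MvPolynomial.X i * f) := by
  classical
  obtain ⟨d, D, hd0, hdy, hdf, hDy, hDf, hdeg⟩ := hf
  have hfne : f ≠ 0 := by
    rintro rfl
    rw [map_zero] at hdf
    simp only [Polynomial.coeff_zero] at hdf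
    have h1 : (1 : ℤ) = 0 := MvPolynomial.monomial_eq_zero.mp hdf.symm
    exact one_ne_zero h1
  have hX : (MvPolynomial.X i : MvPolynomial σ ℤ) = monomial (Finsupp.single i 1) 1 := rfl
  refine ⟨Finsupp.single i 1 + d, Finsupp.single i 1 + D, ?_, ?_, ?_, ?_, ?_, ?_⟩
  · intro h
    have := congrArg (fun e => e i) h
    simp [Finsupp.single_apply] at this
  · simp [Finsupp.single_apply, hi, hdy]
  · rw [map_mul, grad_X]
    have : wy y i = 0 := by simp [wy, hi]
    rw [this, pow_zero, mul_one, Polynomial.coeff_C_mul, hdf, hX, MvPolynomial.monomial_mul,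
      one_mul]
  · simp [Finsupp.single_apply, hi, hDy]
  · rw [map_mul, Polynomial.leadingCoeff_mul, grad_X, Polynomial.C_mul_X_pow_eq_monomial,
      Polynomial.leadingCoeff_monomial, hDf, hX, MvPolynomial.monomial_mul, one_mul]
  · rw [map_mul, Polynomial.natDegree_mul (by
      rw [grad_X, Polynomial.C_mul_X_pow_eq_monomial]
      exact fun h => MvPolynomial.X_ne_zero i ((Polynomial.monomial_eq_zero_iff _ _).mp h))
      (grad_ne_zero _ hfne)]
    omega

lemma Good.node {y : σ} {f g : MvPolynomial σ ℤ} (hf : Good y f) (hg : Good y g) :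
    Good y (MvPolynomial.X y + f * g) := by
  have hfne := hf.ne_zero
  have hgne := hg.ne_zero
  obtain ⟨df, Df, hdf0, hdfy, hdfF, hDfy, hDfF, hdegf⟩ := hf
  obtain ⟨dg, Dg, hdg0, hdgy, hdgF, hDgy, hDgF, hdegg⟩ := hg
  have hFG : grad (fun _ => (1:ℕ)) f * grad (fun _ => 1) g ≠ 0 :=
    mul_ne_zero (grad_ne_zero _ hfne) (grad_ne_zero _ hgne)
  have hnd : (grad (fun _ => (1:ℕ)) f * grad (fun _ => 1) g).natDegree
      = (grad (fun _ => (1:ℕ)) f).natDegree + (grad (fun _ => 1) g).natDegree :=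
    Polynomial.natDegree_mul (grad_ne_zero _ hfne) (grad_ne_zero _ hgne)
  have hdlt : (grad (fun _ => (1:ℕ)) (MvPolynomial.X y)).degree
      < (grad (fun _ => (1:ℕ)) f * grad (fun _ => 1) g).degree := by
    rw [grad_X, Polynomial.C_mul_X_pow_eq_monomial,
      Polynomial.degree_monomial _ (MvPolynomial.X_ne_zero y),
      Polynomial.degree_eq_natDegree hFG, hnd]
    exact_mod_cast by omega
  refine ⟨df + dg, Df + Dg, ?_, ?_, ?_, ?_, ?_, ?_⟩
  · intro h
    exact hdf0 ((Finsupp.add_eq_zero_iff _ _).mp h).1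
  · simp [Finsupp.add_apply, hdfy, hdgy]
  · rw [map_add, map_mul, Polynomial.coeff_add, Polynomial.mul_coeff_zero, hdfF, hdgF,
      grad_X]
    have : (Polynomial.C (MvPolynomial.X y : MvPolynomial σ ℤ) * Polynomial.X ^ wy y y).coeff 0 = 0 := by
      simp [wy, Polynomial.coeff_C_mul]
    rw [this, zero_add, MvPolynomial.monomial_mul, one_mul]
  · simp [Finsupp.add_apply, hDfy, hDgy]
  · rw [map_add, map_mul, Polynomial.leadingCoeff_add_of_degree_lt hdlt,
      Polynomial.leadingCoeff_mul, hDfF, hDgF, MvPolynomial.monomial_mul, one_mul]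
  · have hdeq : (grad (fun _ => (1:ℕ)) (MvPolynomial.X y + f * g)).degree
        = (grad (fun _ => (1:ℕ)) f * grad (fun _ => 1) g).degree := by
      rw [map_add, map_mul]
      exact Polynomial.degree_add_eq_right_of_degree_lt hdlt
    have := Polynomial.natDegree_eq_of_degree_eq hdeq
    rw [this, hnd]
    omega



lemma coeff_single_mul (i : σ) (a b : MvPolynomial σ ℤ) :
    MvPolynomial.coeff (Finsupp.single i 1) (a * b)
      = MvPolynomial.coeff 0 a * MvPolynomial.coeff (Finsupp.single i 1) b
        + MvPolynomial.coeff (Finsupp.single i 1) a * MvPolynomial.coeff 0 b := by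
  classical
  rw [MvPolynomial.coeff_mul, Finsupp.antidiagonal_single, Finset.sum_map]
  have h1 : (Finset.HasAntidiagonal.antidiagonal (1 : ℕ)) = {(0,1),(1,0)} := by decide
  rw [h1]
  rw [Finset.sum_insert (by decide), Finset.sum_singleton]
  simp [Finsupp.single_zero]

/-- divisor of a monomial with nonzero constant coefficient is a constant -/
lemma eq_C_of_mul_eq_monomial {a b : MvPolynomial σ ℤ} {m : σ →₀ ℕ}
    (h : a * b = monomial m 1) (ha : MvPolynomial.coeff 0 a ≠ 0) :
    a = MvPolynomial.C (MvPolynomial.coeff 0 a) := by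
  have hane : a ≠ 0 := fun hz => ha (by rw [hz, MvPolynomial.coeff_zero])
  have hbne : b ≠ 0 := by
    rintro rfl
    rw [mul_zero] at h
    exact one_ne_zero (MvPolynomial.monomial_eq_zero.mp h.symm)
  have hg : grad (fun _ => (1:ℕ)) a * grad (fun _ => 1) b
      = Polynomial.monomial (wdeg (fun _ => 1) m) (monomial m (1:ℤ)) := by
    rw [← map_mul, h, grad_monomial, Polynomial.C_mul_X_pow_eq_monomial]
  have hmne : (monomial m (1:ℤ)) ≠ 0 := fun hz => one_ne_zero (MvPolynomial.monomial_eq_zero.mp hz)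
  have hnd : (grad (fun _ => (1:ℕ)) a).natDegree + (grad (fun _ => 1) b).natDegree
      = wdeg (fun _ => 1) m := by
    rw [← Polynomial.natDegree_mul (grad_ne_zero _ hane) (grad_ne_zero _ hbne), hg,
      Polynomial.natDegree_monomial_eq _ hmne]
  have hnt : (grad (fun _ => (1:ℕ)) a).natTrailingDegree + (grad (fun _ => 1) b).natTrailingDegree
      = wdeg (fun _ => 1) m := by
    rw [← Polynomial.natTrailingDegree_mul (grad_ne_zero _ hane) (grad_ne_zero _ hbne), hg,
      Polynomial.natTrailingDegree_monomial hmne]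
  have hta : (grad (fun _ => (1:ℕ)) a).natTrailingDegree = 0 := by
    have : (grad (fun _ => (1:ℕ)) a).coeff 0 ≠ 0 := by
      intro hz
      have := coeff_coeff_grad (fun _ => (1:ℕ)) a 0 0
      rw [hz, if_pos (wdeg_zero _)] at this
      simp only [MvPolynomial.coeff_zero] at this
      exact ha this.symm
    have := Polynomial.natTrailingDegree_le_of_ne_zero this
    omega
  have h1 := Polynomial.natTrailingDegree_le_natDegree (grad (fun _ => (1:ℕ)) a)
  have h2 := Polynomial.natTrailingDegree_le_natDegree (grad (fun _ => (1:ℕ)) b)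
  have hda : (grad (fun _ => (1:ℕ)) a).natDegree = 0 := by omega
  exact eq_C_of_natDegree_grad_eq_zero a hda

lemma aux_isUnit {y : σ} {f g A B : MvPolynomial σ ℤ} (hf : Good y f) (hg : Good y g)
    (hAB : MvPolynomial.X y + f * g = A * B) (hB0 : MvPolynomial.coeff 0 B = 0) :
    IsUnit A := by
  classical
  have hcf := hf.coeff_zero_eq
  have hcg := hg.coeff_zero_eq
  obtain ⟨df, Df, hdf0, hdfy, hdfF, hDfy, hDfF, hdegf⟩ := hf
  obtain ⟨dg, Dg, hdg0, hdgy, hdgF, hDgy, hDgF, hdegg⟩ := hg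
  have hfne : f ≠ 0 := by
    rintro rfl
    rw [map_zero] at hdfF
    simp only [Polynomial.coeff_zero] at hdfF
    exact one_ne_zero (MvPolynomial.monomial_eq_zero.mp hdfF.symm)
  have hgne : g ≠ 0 := by
    rintro rfl
    rw [map_zero] at hdgF
    simp only [Polynomial.coeff_zero] at hdgF
    exact one_ne_zero (MvPolynomial.monomial_eq_zero.mp hdgF.symm)
  set s : σ →₀ ℕ := Finsupp.single y 1 with hs
  -- Step 1 : coeff s p = 1
  have hXy : (MvPolynomial.X y : MvPolynomial σ ℤ) = monomial s 1 := rfl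
  have hps : MvPolynomial.coeff s (MvPolynomial.X y + f * g) = 1 := by
    rw [MvPolynomial.coeff_add, hXy, MvPolynomial.coeff_monomial, if_pos rfl,
      coeff_single_mul, hcf, hcg, zero_mul, mul_zero, add_zero, add_zero]
  -- Step 2 : ε := coeff 0 A is a unit of ℤ
  have hstep2 : MvPolynomial.coeff 0 A * MvPolynomial.coeff s B = 1 := by
    rw [hAB, coeff_single_mul, hB0, mul_zero, add_zero] at hps
    exact hps
  have hεu : IsUnit (MvPolynomial.coeff 0 A) := IsUnit.of_mul_eq_one _ hstep2
  have hε0 : MvPolynomial.coeff 0 A ≠ 0 := by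
    intro hz; rw [hz, zero_mul] at hstep2; exact one_ne_zero hstep2.symm
  -- Step 3 : the y-free parts multiply to a monomial
  have ha0b0 : (grad (wy y) A).coeff 0 * (grad (wy y) B).coeff 0
      = monomial (df + dg) 1 := by
    have : grad (wy y) (MvPolynomial.X y + f * g) = grad (wy y) A * grad (wy y) B := by
      rw [← map_mul, hAB]
    have h0 := congrArg (fun q => Polynomial.coeff q 0) this
    simp only [map_add, map_mul, Polynomial.coeff_add, Polynomial.mul_coeff_zero] at h0
    rw [hdfF, hdgF, grad_X] at h0
    have hc : (Polynomial.C (MvPolynomial.X y : MvPolynomial σ ℤ) * Polynomial.X ^ wy y y).coeff 0 = 0 := by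
      simp [wy, Polynomial.coeff_C_mul]
    rw [hc, zero_add, MvPolynomial.monomial_mul, one_mul] at h0
    exact h0.symm
  -- Step 4 : coeff 0 of the y-free part of A equals coeff 0 A ≠ 0
  have ha00 : MvPolynomial.coeff 0 ((grad (wy y) A).coeff 0) = MvPolynomial.coeff 0 A := by
    rw [coeff_coeff_grad, if_pos (wdeg_zero _)]
  -- Step 5 : the y-free part of A is the constant ε
  have ha0C : (grad (wy y) A).coeff 0 = MvPolynomial.C (MvPolynomial.coeff 0 A) := by
    have := eq_C_of_mul_eq_monomial ha0b0 (by rw [ha00]; exact hε0)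
    rw [this, ha00]
  -- Step 6 : y-free exponents in the support of A are trivial
  have hyfree : ∀ e : σ →₀ ℕ, MvPolynomial.coeff e A ≠ 0 → e y = 0 → e = 0 := by
    intro e he hey
    have h := coeff_coeff_grad (wy y) A 0 e
    rw [if_pos (by rw [wdeg_wy, hey]), ha0C] at h
    by_contra hne
    rw [MvPolynomial.coeff_C, if_neg (Ne.symm hne)] at h
    exact he h.symm
  -- Step 7 : conclude
  by_cases hA : (grad (fun _ => (1:ℕ)) A).natDegree = 0
  · have hAC := eq_C_of_natDegree_grad_eq_zero A hA
    rw [hAC]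
    exact hεu.map MvPolynomial.C
  · exfalso
    have hpne : (MvPolynomial.X y + f * g : MvPolynomial σ ℤ) ≠ 0 := by
      intro hz; rw [hz, MvPolynomial.coeff_zero] at hps; exact one_ne_zero hps.symm
    have hAne : A ≠ 0 := by rintro rfl; rw [zero_mul] at hAB; exact hpne hAB
    have hBne : B ≠ 0 := by rintro rfl; rw [mul_zero] at hAB; exact hpne hAB
    -- leading coefficient of grad of p
    have hFG : grad (fun _ => (1:ℕ)) f * grad (fun _ => 1) g ≠ 0 :=
      mul_ne_zero (grad_ne_zero _ hfne) (grad_ne_zero _ hgne)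
    have hnd : (grad (fun _ => (1:ℕ)) f * grad (fun _ => 1) g).natDegree
        = (grad (fun _ => (1:ℕ)) f).natDegree + (grad (fun _ => 1) g).natDegree :=
      Polynomial.natDegree_mul (grad_ne_zero _ hfne) (grad_ne_zero _ hgne)
    have hdlt : (grad (fun _ => (1:ℕ)) (MvPolynomial.X y)).degree
        < (grad (fun _ => (1:ℕ)) f * grad (fun _ => 1) g).degree := by
      rw [grad_X, Polynomial.C_mul_X_pow_eq_monomial,
        Polynomial.degree_monomial _ (MvPolynomial.X_ne_zero y),
        Polynomial.degree_eq_natDegree hFG, hnd]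
      exact_mod_cast by omega
    have hlcp : (grad (fun _ => (1:ℕ)) (MvPolynomial.X y + f * g)).leadingCoeff
        = monomial (Df + Dg) 1 := by
      rw [map_add, map_mul, Polynomial.leadingCoeff_add_of_degree_lt hdlt,
        Polynomial.leadingCoeff_mul, hDfF, hDgF, MvPolynomial.monomial_mul, one_mul]
    have hlcAB : (grad (fun _ => (1:ℕ)) A).leadingCoeff
        * (grad (fun _ => (1:ℕ)) B).leadingCoeff = monomial (Df + Dg) 1 := by
      rw [← Polynomial.leadingCoeff_mul, ← map_mul, ← hAB, hlcp]
    -- the leading coefficient of grad A is y-free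
    set q := (grad (fun _ => (1:ℕ)) A).leadingCoeff with hq
    have hqne : q ≠ 0 := by
      rw [hq, Polynomial.leadingCoeff_ne_zero]
      exact grad_ne_zero _ hAne
    have hrne : (grad (fun _ => (1:ℕ)) B).leadingCoeff ≠ 0 := by
      rw [Polynomial.leadingCoeff_ne_zero]
      exact grad_ne_zero _ hBne
    have hDy' : wdeg (wy y) (Df + Dg) = 0 := by
      rw [wdeg_wy, Finsupp.add_apply, hDfy, hDgy]
    have hgq : grad (wy y) q * grad (wy y) ((grad (fun _ => (1:ℕ)) B).leadingCoeff)
        = Polynomial.monomial 0 (monomial (Df + Dg) (1:ℤ)) := by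
      rw [← map_mul, hlcAB, grad_monomial, hDy', Polynomial.C_mul_X_pow_eq_monomial]
    have hmne : (monomial (Df + Dg) (1:ℤ)) ≠ 0 :=
      fun hz => one_ne_zero (MvPolynomial.monomial_eq_zero.mp hz)
    have hdeg0 : (grad (wy y) q).natDegree = 0 := by
      have := Polynomial.natDegree_mul (grad_ne_zero (wy y) hqne) (grad_ne_zero (wy y) hrne)
      rw [hgq, Polynomial.natDegree_monomial_eq _ hmne] at this
      omega
    -- pick a monomial of q
    obtain ⟨e, he⟩ := MvPolynomial.ne_zero_iff.mp hqne
    have heA : wdeg (fun _ => 1) e = (grad (fun _ => (1:ℕ)) A).natDegree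
        ∧ MvPolynomial.coeff e A ≠ 0 := by
      have h := coeff_coeff_grad (fun _ => (1:ℕ)) A ((grad (fun _ => (1:ℕ)) A).natDegree) e
      rw [Polynomial.leadingCoeff] at hq
      rw [← hq] at h
      by_cases hc : wdeg (fun _ => 1) e = (grad (fun _ => (1:ℕ)) A).natDegree
      · exact ⟨hc, by rw [h, if_pos hc] at he; exact he⟩
      · rw [if_neg hc] at h; exact absurd h he
    have hey : e y = 0 := by
      have := le_natDegree_grad (wy y) he
      rw [hdeg0, Nat.le_zero, wdeg_wy] at this
      exact this
    have : e = 0 := hyfree e heA.2 hey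
    rw [this, wdeg_zero] at heA
    exact hA heA.1.symm

theorem good_irreducible {y : σ} {f g : MvPolynomial σ ℤ} (hf : Good y f) (hg : Good y g) :
    Irreducible (MvPolynomial.X y + f * g) := by
  classical
  constructor
  · intro hu
    have h0 : MvPolynomial.constantCoeff (MvPolynomial.X y + f * g) = 0 := by
      rw [map_add, map_mul, MvPolynomial.constantCoeff_X]
      have h1 : MvPolynomial.constantCoeff f = 0 := hf.coeff_zero_eq
      have h2 : MvPolynomial.constantCoeff g = 0 := hg.coeff_zero_eq
      rw [h1, h2, mul_zero, add_zero]
    have := hu.map (MvPolynomial.constantCoeff (σ := σ) (R := ℤ))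
    rw [h0] at this
    exact not_isUnit_zero this
  · intro A B hAB
    have h0 : MvPolynomial.coeff 0 A * MvPolynomial.coeff 0 B = 0 := by
      have h1 : MvPolynomial.constantCoeff (MvPolynomial.X y + f * g) = 0 := by
        rw [map_add, map_mul, MvPolynomial.constantCoeff_X]
        have h1 : MvPolynomial.constantCoeff f = 0 := hf.coeff_zero_eq
        have h2 : MvPolynomial.constantCoeff g = 0 := hg.coeff_zero_eq
        rw [h1, h2, mul_zero, add_zero]
      rw [hAB, map_mul] at h1
      exact h1
    rcases mul_eq_zero.mp h0 with hA0 | hB0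
    · exact Or.inr (aux_isUnit hf hg (by rw [hAB, mul_comm]) hA0)
    · exact Or.inl (aux_isUnit hf hg hAB hB0)

theorem irreducible_X (i : σ) : Irreducible (MvPolynomial.X i : MvPolynomial σ ℤ) := by
  classical
  have hXi : (MvPolynomial.X i : MvPolynomial σ ℤ) = monomial (Finsupp.single i 1) 1 := rfl
  have key : ∀ A B : MvPolynomial σ ℤ, (MvPolynomial.X i : MvPolynomial σ ℤ) = A * B →
      (grad (fun _ => (1:ℕ)) A).natDegree = 0 → IsUnit A := by
    intro A B hAB hA
    have hAC := eq_C_of_natDegree_grad_eq_zero A hA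
    have : MvPolynomial.coeff (Finsupp.single i 1) (MvPolynomial.X i : MvPolynomial σ ℤ) = 1 := by
      rw [hXi, MvPolynomial.coeff_monomial, if_pos rfl]
    rw [hAB, hAC, MvPolynomial.coeff_C_mul] at this
    have := IsUnit.of_mul_eq_one _ this
    rw [hAC]
    exact this.map MvPolynomial.C
  constructor
  · intro hu
    have := hu.map (MvPolynomial.constantCoeff (σ := σ) (R := ℤ))
    rw [MvPolynomial.constantCoeff_X] at this
    exact not_isUnit_zero this
  · intro A B hAB
    have hne : (MvPolynomial.X i : MvPolynomial σ ℤ) ≠ 0 := MvPolynomial.X_ne_zero i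
    have hAne : A ≠ 0 := by rintro rfl; rw [zero_mul] at hAB; exact hne hAB
    have hBne : B ≠ 0 := by rintro rfl; rw [mul_zero] at hAB; exact hne hAB
    have hsum : (grad (fun _ => (1:ℕ)) A).natDegree + (grad (fun _ => (1:ℕ)) B).natDegree = 1 := by
      have h := Polynomial.natDegree_mul (grad_ne_zero (fun _ => (1:ℕ)) hAne)
        (grad_ne_zero (fun _ => (1:ℕ)) hBne)
      rw [← map_mul, ← hAB, grad_X, Polynomial.C_mul_X_pow_eq_monomial,
        Polynomial.natDegree_monomial_eq _ (MvPolynomial.X_ne_zero i)] at h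
      omega
    rcases Nat.eq_zero_or_pos (grad (fun _ => (1:ℕ)) A).natDegree with h | h
    · exact Or.inl (key A B hAB h)
    · refine Or.inr (key B A (by rw [hAB, mul_comm]) ?_)
      omega

section IMLNlayer

open MvPolynomial

lemma good_all {X Λ : Type} (N : IMLN X Λ) (hN : N.IsIMLN) (P : N.V → IMLN.PolyRing X Λ)
    (hP : IMLN.IsPolyAssignment N P) :
    ∀ v : N.V, Good (Sum.inr (Sum.inr ()) : X ⊕ (Λ ⊕ Unit)) (P v) := by
  haveI := N.fintypeV
  have hwf : WellFounded (fun a b : N.V => N.Arc b a) := by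
    have htg : WellFounded (fun a b : N.V => Relation.TransGen N.Arc b a) := by
      haveI : IsTrans N.V (fun a b => Relation.TransGen N.Arc b a) :=
        ⟨fun a b c h1 h2 => Relation.TransGen.trans h2 h1⟩
      haveI : IsIrrefl N.V (fun a b => Relation.TransGen N.Arc b a) :=
        ⟨fun a h => hN.acyclic a h⟩
      exact Finite.wellFounded_of_trans_of_irrefl _
    exact Subrelation.wf (fun {a b} h => Relation.TransGen.single h) htg
  intro v
  refine hwf.induction (C := fun v => Good (Sum.inr (Sum.inr ()) : X ⊕ (Λ ⊕ Unit)) (P v)) v ?_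
  intro v IH
  have hout : N.outDeg v = 0 ∨ N.outDeg v = 1 ∨ N.outDeg v = 2 := by
    by_cases hv : v = N.root
    · rw [hv]
      rcases hN.rootOut with h | h
      · exact Or.inr (Or.inl h)
      · exact Or.inr (Or.inr h)
    · rcases hN.degrees v hv with ⟨-, h⟩ | ⟨-, h⟩
      · exact h
      · exact Or.inr (Or.inl h)
  rcases hout with h0 | h1 | h2
  · rw [hP.1 v h0]
    exact good_X (by simp)
  · obtain ⟨w, hw⟩ := Set.ncard_eq_one.mp h1
    have harc : N.Arc v w := by
      have hmem : w ∈ {u : N.V | N.Arc v u} := by rw [hw]; exact rfl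
      exact hmem
    rw [hP.2.2 v w h1 harc]
    exact Good.mul_X (IH w harc) (by simp)
  · obtain ⟨a, b, hab, hset⟩ := Set.ncard_eq_two.mp h2
    have ha : N.Arc v a := by
      have hmem : a ∈ {u : N.V | N.Arc v u} := by rw [hset]; exact Set.mem_insert _ _
      exact hmem
    have hb : N.Arc v b := by
      have hmem : b ∈ {u : N.V | N.Arc v u} := by
        rw [hset]; exact Set.mem_insert_of_mem _ rfl
      exact hmem
    rw [hP.2.1 v a b hab ha hb]
    exact Good.node (IH a ha) (IH b hb)

end IMLNlayer

end IrrAux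


/-- **Proposition (irr).** Let `N` be an IMLN.  Then, for any node `u` of `N`, the
polynomial `p(u) ∈ ℤ[x₁,…,xₙ,λ₁,…,λᵣ,y]` is irreducible if and only if `u` is a
tree node. -/
theorem IMLN.poly_irreducible_iff_treeNode (X Λ : Type) (N : IMLN X Λ)
    (hN : N.IsIMLN) (P : N.V → IMLN.PolyRing X Λ) (hP : IMLN.IsPolyAssignment N P)
    (u : N.V) :
    Irreducible (P u) ↔ N.IsTreeNode u := by
  have hgood := IrrAux.good_all N hN P hP
  constructor
  · intro hirr h1
    obtain ⟨w, hw⟩ := Set.ncard_eq_one.mp h1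
    have harc : N.Arc u w := by
      have hmem : w ∈ {v : N.V | N.Arc u v} := by rw [hw]; exact rfl
      exact hmem
    have heq := hP.2.2 u w h1 harc
    rcases hirr.isUnit_or_isUnit heq with hu | hu
    · have h2 : MvPolynomial.constantCoeff (IMLN.lVar (N.retLabel u) : IMLN.PolyRing X Λ) = 0 := by
        simp only [IMLN.lVar]
        exact MvPolynomial.constantCoeff_X (R := ℤ) _
      have := hu.map (MvPolynomial.constantCoeff (σ := X ⊕ (Λ ⊕ Unit)) (R := ℤ))
      rw [h2] at this
      exact not_isUnit_zero this
    · have hc : MvPolynomial.constantCoeff (P w) = 0 := (hgood w).coeff_zero_eq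
      have := hu.map (MvPolynomial.constantCoeff (σ := X ⊕ (Λ ⊕ Unit)) (R := ℤ))
      rw [hc] at this
      exact not_isUnit_zero this
  · intro htree
    have hout : N.outDeg u = 0 ∨ N.outDeg u = 1 ∨ N.outDeg u = 2 := by
      by_cases hv : u = N.root
      · rw [hv]
        rcases hN.rootOut with h | h
        · exact Or.inr (Or.inl h)
        · exact Or.inr (Or.inr h)
      · rcases hN.degrees u hv with ⟨-, h⟩ | ⟨-, h⟩
        · exact h
        · exact Or.inr (Or.inl h)
    rcases hout with h0 | h1 | h2
    · rw [hP.1 u h0]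
      exact IrrAux.irreducible_X _
    · exact absurd h1 htree
    · obtain ⟨a, b, hab, hset⟩ := Set.ncard_eq_two.mp h2
      have ha : N.Arc u a := by
        have hmem : a ∈ {v : N.V | N.Arc u v} := by rw [hset]; exact Set.mem_insert _ _
        exact hmem
      have hb : N.Arc u b := by
        have hmem : b ∈ {v : N.V | N.Arc u v} := by
          rw [hset]; exact Set.mem_insert_of_mem _ rfl
        exact hmem
      rw [hP.2.1 u a b hab ha hb]
      exact IrrAux.good_irreducible (hgood a) (hgood b)
end

section
/- Let N be an internally labelled phylogenetic network, and let v_1, v_2 be two reticulation nodes of N. If p(v_1) = p(v_2), then v_1 = v_2. -/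
/-- Auxiliary: under an evaluation killing `y` and exactly the label of the
reticulation node `v₁`, any node whose polynomial evaluates to zero reaches `v₁`. -/
private lemma IMLN.aux_eval_zero (X Λ : Type) (N : IMLN X Λ) (hN : N.IsILPN)
    (P : N.V → IMLN.PolyRing X Λ) (hP : IMLN.IsPolyAssignment N P)
    (v₁ : N.V) (h₁ : N.IsRet v₁) (f : X ⊕ (Λ ⊕ Unit) → ℤ)
    (hfx : ∀ x : X, f (Sum.inl x) = 1)
    (hfy : ∀ u : Unit, f (Sum.inr (Sum.inr u)) = 0)
    (hfl : ∀ l : Λ, f (Sum.inr (Sum.inl l)) = 0 ↔ l = N.retLabel v₁) :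
    ∀ u : N.V, MvPolynomial.eval f (P u) = 0 → N.Reaches u v₁ := by
  haveI := N.fintypeV
  haveI h1 : IsTrans N.V (fun a b => Relation.TransGen N.Arc b a) :=
    ⟨fun a b c hab hbc => hbc.trans hab⟩
  haveI h2 : IsIrrefl N.V (fun a b => Relation.TransGen N.Arc b a) :=
    ⟨fun a h => hN.1.acyclic a h⟩
  have hwf : WellFounded (fun a b : N.V => Relation.TransGen N.Arc b a) :=
    Finite.wellFounded_of_trans_of_irrefl _
  intro u
  induction u using hwf.induction with
  | _ u IH =>
  intro hval
  have hdeg : N.outDeg u = 0 ∨ N.outDeg u = 1 ∨ N.outDeg u = 2 := by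
    by_cases hroot : u = N.root
    · subst hroot
      rcases hN.1.rootOut with h | h <;> tauto
    · rcases hN.1.degrees u hroot with ⟨_, h⟩ | ⟨_, h⟩ <;> tauto
  rcases hdeg with hd0 | hd1 | hd2
  · -- leaf: evaluates to 1, contradiction
    have := hP.1 u hd0
    rw [this] at hval
    simp [IMLN.xVar, hfx] at hval
  · -- out-degree one: a reticulation node
    obtain ⟨w, hw⟩ := Set.ncard_eq_one.mp hd1
    have harc : N.Arc u w := by
      have : w ∈ {z : N.V | N.Arc u z} := by rw [hw]; exact rfl
      exact this
    have hPu := hP.2.2 u w hd1 harc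
    rw [hPu] at hval
    simp only [map_mul, IMLN.lVar, MvPolynomial.eval_X] at hval
    rcases mul_eq_zero.mp hval with hz | hz
    · -- label of u equals label of v₁, so u = v₁
      have hlab : N.retLabel u = N.retLabel v₁ := (hfl _).mp hz
      have hune : u ≠ N.root := by
        intro hr
        exact hN.2.1 u ⟨by rw [hr, hN.1.rootIn]; exact Nat.zero_le 1, hd1⟩
      have hret : N.IsRet u := by
        rcases hN.1.degrees u hune with ⟨hin, _⟩ | h
        · exact absurd ⟨hin.le, hd1⟩ (hN.2.1 u)
        · exact h
      rw [hN.1.retInj u v₁ hret h₁ hlab]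
      exact Relation.ReflTransGen.refl
    · exact Relation.ReflTransGen.head harc (IH w (Relation.TransGen.single harc) hz)
  · -- out-degree two: tree node with two distinct children
    obtain ⟨a, b, hab, hset⟩ := Set.ncard_eq_two.mp hd2
    have ha : N.Arc u a := by
      have : a ∈ {z : N.V | N.Arc u z} := by rw [hset]; exact Set.mem_insert a {b}
      exact this
    have hb : N.Arc u b := by
      have : b ∈ {z : N.V | N.Arc u z} := by
        rw [hset]; exact Set.mem_insert_of_mem a rfl
      exact this
    have hPu := hP.2.1 u a b hab ha hb
    rw [hPu] at hval
    simp only [map_add, map_mul, IMLN.yVar, MvPolynomial.eval_X, hfy, zero_add] at hval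
    rcases mul_eq_zero.mp hval with hz | hz
    · exact Relation.ReflTransGen.head ha (IH a (Relation.TransGen.single ha) hz)
    · exact Relation.ReflTransGen.head hb (IH b (Relation.TransGen.single hb) hz)

/-- Auxiliary: the polynomial of a reticulation node evaluates to zero under an
evaluation killing its own label. -/
private lemma IMLN.aux_self_zero (X Λ : Type) (N : IMLN X Λ)
    (P : N.V → IMLN.PolyRing X Λ) (hP : IMLN.IsPolyAssignment N P)
    (v : N.V) (h : N.IsRet v) (f : X ⊕ (Λ ⊕ Unit) → ℤ)
    (hfl : f (Sum.inr (Sum.inl (N.retLabel v))) = 0) :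
    MvPolynomial.eval f (P v) = 0 := by
  haveI := N.fintypeV
  obtain ⟨w, hw⟩ := Set.ncard_eq_one.mp h.2
  have harc : N.Arc v w := by
    have : w ∈ {z : N.V | N.Arc v z} := by rw [hw]; exact rfl
    exact this
  rw [hP.2.2 v w h.2 harc]
  simp [IMLN.lVar, hfl]

/-- **Lemma (ret-unique).** Let `N` be an internally labelled phylogenetic network
and `v₁, v₂` two reticulation nodes.  If `p(v₁) = p(v₂)`, then `v₁ = v₂`. -/
theorem IMLN.ret_poly_injective (X Λ : Type) (N : IMLN X Λ) (hN : N.IsILPN)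
    (P : N.V → IMLN.PolyRing X Λ) (hP : IMLN.IsPolyAssignment N P)
    (v₁ v₂ : N.V) (h₁ : N.IsRet v₁) (h₂ : N.IsRet v₂)
    (heq : P v₁ = P v₂) :
    v₁ = v₂ := by
  classical
  by_contra hne
  -- evaluation killing the label of v₁
  set f₁ : X ⊕ (Λ ⊕ Unit) → ℤ := fun s =>
    match s with
    | Sum.inl _ => 1
    | Sum.inr (Sum.inl l) => if l = N.retLabel v₁ then 0 else 1
    | Sum.inr (Sum.inr _) => 0 with hf₁
  have hfl₁ : ∀ l : Λ, f₁ (Sum.inr (Sum.inl l)) = 0 ↔ l = N.retLabel v₁ := by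
    intro l
    by_cases h : l = N.retLabel v₁ <;> simp [hf₁, h]
  have hz₁ : MvPolynomial.eval f₁ (P v₁) = 0 :=
    IMLN.aux_self_zero X Λ N P hP v₁ h₁ f₁ ((hfl₁ _).mpr rfl)
  have hz₂ : MvPolynomial.eval f₁ (P v₂) = 0 := by rw [← heq]; exact hz₁
  have hr21 : N.Reaches v₂ v₁ :=
    IMLN.aux_eval_zero X Λ N hN P hP v₁ h₁ f₁ (fun _ => rfl) (fun _ => rfl) hfl₁ v₂ hz₂
  -- evaluation killing the label of v₂
  set f₂ : X ⊕ (Λ ⊕ Unit) → ℤ := fun s =>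
    match s with
    | Sum.inl _ => 1
    | Sum.inr (Sum.inl l) => if l = N.retLabel v₂ then 0 else 1
    | Sum.inr (Sum.inr _) => 0 with hf₂
  have hfl₂ : ∀ l : Λ, f₂ (Sum.inr (Sum.inl l)) = 0 ↔ l = N.retLabel v₂ := by
    intro l
    by_cases h : l = N.retLabel v₂ <;> simp [hf₂, h]
  have hz₂' : MvPolynomial.eval f₂ (P v₂) = 0 :=
    IMLN.aux_self_zero X Λ N P hP v₂ h₂ f₂ ((hfl₂ _).mpr rfl)
  have hz₁' : MvPolynomial.eval f₂ (P v₁) = 0 := by rw [heq]; exact hz₂'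
  have hr12 : N.Reaches v₁ v₂ :=
    IMLN.aux_eval_zero X Λ N hN P hP v₂ h₂ f₂ (fun _ => rfl) (fun _ => rfl) hfl₂ v₁ hz₁'
  -- strictness and a cycle
  have ht21 : Relation.TransGen N.Arc v₂ v₁ := by
    rcases (Relation.ReflTransGen.cases_head hr21) with h | ⟨c, hc, hcb⟩
    · exact absurd h.symm hne
    · exact Relation.TransGen.head' hc hcb
  exact hN.1.acyclic v₁ (Relation.TransGen.trans_right hr12 ht21)
end

section
/- Let N be an internally labelled phylogenetic network and let v be a reticulation node of N. A node u is a strong ancestor of v if and only if one of the following two conditions holds: p(v) divides p(u), in which case u is a reticulation node; or p(v) divides p(u) − y, in which case u is a tree node. -/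
namespace IMLNAux

open IMLN
open scoped Classical

variable {X Λ : Type}

/-- All coefficients nonnegative. -/
def NN (q : IMLN.PolyRing X Λ) : Prop := ∀ m, 0 ≤ q.coeff m

lemma NN_X (i : X ⊕ (Λ ⊕ Unit)) : NN (MvPolynomial.X i : IMLN.PolyRing X Λ) := by
  classical
  intro m
  rw [MvPolynomial.coeff_X']
  split <;> norm_num

lemma NN_zero : NN (0 : IMLN.PolyRing X Λ) := by
  intro m; simp

lemma NN_mul {p q : IMLN.PolyRing X Λ} (hp : NN p) (hq : NN q) : NN (p * q) := by
  classical
  intro m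
  rw [MvPolynomial.coeff_mul]
  exact Finset.sum_nonneg fun x _ => mul_nonneg (hp _) (hq _)

lemma NN_y_add {q : IMLN.PolyRing X Λ} (hq : NN q) : NN (IMLN.yVar + q) := by
  intro m
  rw [MvPolynomial.coeff_add]
  exact add_nonneg (NN_X _ m) (hq m)

lemma y_add_ne_zero {q : IMLN.PolyRing X Λ} (hq : NN q) : IMLN.yVar + q ≠ 0 := by
  intro h
  have h1 : MvPolynomial.coeff (Finsupp.single (Sum.inr (Sum.inr ()) : X ⊕ (Λ ⊕ Unit)) 1)
      (IMLN.yVar + q) = 0 := by rw [h]; simp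
  rw [MvPolynomial.coeff_add,
    show (IMLN.yVar : IMLN.PolyRing X Λ)
      = MvPolynomial.X (Sum.inr (Sum.inr ())) from rfl, MvPolynomial.coeff_X] at h1
  have := hq (Finsupp.single (Sum.inr (Sum.inr ())) 1)
  rw [if_pos rfl] at h1
  omega

lemma X_mul_ne_X {i j : X ⊕ (Λ ⊕ Unit)} (hij : i ≠ j) (q : IMLN.PolyRing X Λ) :
    MvPolynomial.X i * q ≠ MvPolynomial.X j := by
  intro h
  have h2 : (MvPolynomial.aeval
        (fun k : X ⊕ (Λ ⊕ Unit) => if k = i then 0 else MvPolynomial.X k)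
        : IMLN.PolyRing X Λ →ₐ[ℤ] IMLN.PolyRing X Λ) (MvPolynomial.X i * q)
      = (MvPolynomial.aeval
        (fun k : X ⊕ (Λ ⊕ Unit) => if k = i then 0 else MvPolynomial.X k)
        : IMLN.PolyRing X Λ →ₐ[ℤ] IMLN.PolyRing X Λ) (MvPolynomial.X j) := by rw [h]
  rw [map_mul, MvPolynomial.aeval_X, MvPolynomial.aeval_X, if_pos rfl, if_neg (Ne.symm hij),
    zero_mul] at h2
  exact MvPolynomial.X_ne_zero j h2.symm

variable {N : IMLN X Λ}

lemma no_child {u : N.V} (h : N.outDeg u = 0) {w : N.V} (hw : N.Arc u w) : False := by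
  haveI := N.fintypeV
  rw [IMLN.outDeg, Set.ncard_eq_zero (Set.toFinite _)] at h
  have hw' : w ∈ {w : N.V | N.Arc u w} := hw
  rw [h] at hw'
  exact hw'

lemma child_unique {u : N.V} (h : N.outDeg u = 1) :
    ∃ c, N.Arc u c ∧ ∀ w, N.Arc u w → w = c := by
  obtain ⟨c, hc⟩ := Set.ncard_eq_one.mp h
  refine ⟨c, ?_, fun w hw => ?_⟩
  · have : c ∈ {w : N.V | N.Arc u w} := by rw [hc]; exact rfl
    exact this
  · have : w ∈ ({c} : Set N.V) := by rw [← hc]; exact hw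
    exact this

lemma children_two {u : N.V} (h : N.outDeg u = 2) :
    ∃ c₁ c₂, c₁ ≠ c₂ ∧ N.Arc u c₁ ∧ N.Arc u c₂ ∧ ∀ w, N.Arc u w → w = c₁ ∨ w = c₂ := by
  obtain ⟨c₁, c₂, hne, hc⟩ := Set.ncard_eq_two.mp h
  have h1 : c₁ ∈ {w : N.V | N.Arc u w} := by rw [hc]; exact Or.inl rfl
  have h2 : c₂ ∈ {w : N.V | N.Arc u w} := by rw [hc]; exact Or.inr rfl
  refine ⟨c₁, c₂, hne, h1, h2, fun w hw => ?_⟩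
  have : w ∈ ({c₁, c₂} : Set N.V) := by rw [← hc]; exact hw
  exact this

lemma ret_of_outdeg_one (hN : N.IsILPN) {u : N.V} (h : N.outDeg u = 1) : N.IsRet u := by
  by_cases hr : u = N.root
  · exact absurd ⟨by rw [hr, hN.1.rootIn]; omega, h⟩ (hN.2.1 u)
  · rcases hN.1.degrees u hr with ⟨h1, _⟩ | h2
    · exact absurd ⟨by omega, h⟩ (hN.2.1 u)
    · exact h2

lemma outdeg_cases (hN : N.IsILPN) (u : N.V) :
    N.outDeg u = 0 ∨ N.outDeg u = 1 ∨ N.outDeg u = 2 := by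
  by_cases hr : u = N.root
  · subst hr; rcases hN.1.rootOut with h | h <;> simp [h]
  · rcases hN.1.degrees u hr with ⟨_, h⟩ | ⟨_, h⟩ <;> tauto

lemma SR_cases {u v : N.V} (h : N.StrongReach u v) :
    u = v ∨ ∃ w, N.Arc u w ∧ (w = v ∨ ((N.IsElem w ∨ N.IsRet w) ∧ N.StrongReach w v)) := by
  cases h with
  | refl => exact Or.inl rfl
  | single h => exact Or.inr ⟨_, h, Or.inl rfl⟩
  | cons h hw hsr => exact Or.inr ⟨_, h, Or.inr ⟨hw, hsr⟩⟩

/-- The ring map killing the variable `λ_v`. -/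
noncomputable def killv (N : IMLN X Λ) (v : N.V) :
    IMLN.PolyRing X Λ →ₐ[ℤ] IMLN.PolyRing X Λ :=
  MvPolynomial.aeval
    (fun j => if j = Sum.inr (Sum.inl (N.retLabel v)) then 0 else MvPolynomial.X j)

lemma killv_lVar_self (v : N.V) : killv N v (IMLN.lVar (N.retLabel v)) = 0 := by
  simp [killv, IMLN.lVar]

lemma killv_lVar_ne (v : N.V) {l : Λ} (h : l ≠ N.retLabel v) :
    killv N v (IMLN.lVar l) = IMLN.lVar l := by
  simp [killv, IMLN.lVar, h]

lemma killv_yVar (v : N.V) : killv N v (IMLN.yVar : IMLN.PolyRing X Λ) = IMLN.yVar := by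
  simp [killv, IMLN.yVar]

lemma killv_xVar (v : N.V) (x : X) :
    killv N v (IMLN.xVar x : IMLN.PolyRing X Λ) = IMLN.xVar x := by
  simp [killv, IMLN.xVar]

lemma killv_Pv {P : N.V → IMLN.PolyRing X Λ} (hP : IMLN.IsPolyAssignment N P)
    {v : N.V} (hv : N.IsRet v) : killv N v (P v) = 0 := by
  obtain ⟨c, hc, -⟩ := child_unique hv.2
  rw [hP.2.2 v c hv.2 hc, map_mul, killv_lVar_self, zero_mul]

lemma arc_wf (hN : N.IsILPN) : WellFounded (fun a b : N.V => N.Arc b a) := by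
  haveI := N.fintypeV
  have hT : WellFounded (fun a b : N.V => Relation.TransGen N.Arc b a) := by
    haveI : IsTrans N.V (fun a b => Relation.TransGen N.Arc b a) :=
      ⟨fun _ _ _ h1 h2 => h2.trans h1⟩
    haveI : IsIrrefl N.V (fun a b => Relation.TransGen N.Arc b a) :=
      ⟨fun a h => hN.1.acyclic a h⟩
    exact Finite.wellFounded_of_trans_of_irrefl _
  exact Subrelation.wf (fun h => Relation.TransGen.single h) hT

/-- Key structural lemma: the image under `killv` classifies strong reachability. -/
lemma key (N : IMLN X Λ) (hN : N.IsILPN)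
    (P : N.V → IMLN.PolyRing X Λ) (hP : IMLN.IsPolyAssignment N P)
    (v : N.V) (hv : N.IsRet v) :
    ∀ u : N.V,
      (N.StrongReach u v →
        killv N v (P u) = if N.outDeg u = 1 then 0 else IMLN.yVar) ∧
      (¬ N.StrongReach u v → killv N v (P u) ≠ 0 ∧ killv N v (P u) ≠ IMLN.yVar) ∧
      NN (killv N v (P u)) := by
  intro u
  induction u using WellFounded.induction (arc_wf hN) with
  | _ u IH =>
  have hch : ∀ w, N.Arc u w → ¬ N.StrongReach u v → killv N v (P w) ≠ 0 := by
    intro w hw hns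
    by_cases hwv : w = v
    · exact absurd (hwv ▸ IMLN.StrongReach.single hw) hns
    by_cases hsrw : N.StrongReach w v
    · by_cases h1w : N.outDeg w = 1
      · exact absurd
          (IMLN.StrongReach.cons hw (Or.inr (ret_of_outdeg_one hN h1w)) hsrw) hns
      · rw [(IH w hw).1 hsrw, if_neg h1w]
        exact MvPolynomial.X_ne_zero _
    · exact ((IH w hw).2.1 hsrw).1
  rcases outdeg_cases hN u with h0 | h1 | h2
  · -- leaf
    have hPu : P u = IMLN.xVar (N.leafLabel u) := hP.1 u h0
    have hne : ¬ N.StrongReach u v := by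
      intro hsr
      rcases SR_cases hsr with rfl | ⟨w, hw, -⟩
      · rw [hv.2] at h0; omega
      · exact no_child h0 hw
    refine ⟨fun hsr => absurd hsr hne, fun _ => ?_, ?_⟩
    · rw [hPu, killv_xVar]
      constructor
      · exact MvPolynomial.X_ne_zero _
      · intro h
        exact absurd (MvPolynomial.X_injective h) (by simp)
    · rw [hPu, killv_xVar]; exact NN_X _
  · -- out-degree one: reticulation
    obtain ⟨c, hc, hcu⟩ := child_unique h1
    have hPu : P u = IMLN.lVar (N.retLabel u) * P c := hP.2.2 u c h1 hc
    by_cases huv : u = v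
    · subst huv
      have h0 : killv N u (P u) = 0 := killv_Pv hP hv
      refine ⟨fun _ => by rw [if_pos h1]; exact h0,
        fun hns => absurd (IMLN.StrongReach.refl u) hns, by rw [h0]; exact NN_zero⟩
    · have hlab : N.retLabel u ≠ N.retLabel v := fun h =>
        huv (hN.1.retInj u v (ret_of_outdeg_one hN h1) hv h)
      have fPu : killv N v (P u) = IMLN.lVar (N.retLabel u) * killv N v (P c) := by
        rw [hPu, map_mul, killv_lVar_ne v hlab]
      refine ⟨?_, ?_, ?_⟩
      · intro hsr
        rw [if_pos h1, fPu]
        rcases SR_cases hsr with rfl | ⟨w, hw, hcase⟩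
        · exact absurd rfl huv
        · have hwc : w = c := hcu w hw
          subst hwc
          rcases hcase with rfl | ⟨hre, hsrw⟩
          · rw [killv_Pv hP hv, mul_zero]
          · have hre' : N.IsRet w := hre.resolve_left (fun he => hN.2.1 w he)
            rw [(IH w hw).1 hsrw, if_pos hre'.2, mul_zero]
      · intro hns
        have hc0 : killv N v (P c) ≠ 0 := hch c hc hns
        constructor
        · rw [fPu]
          exact mul_ne_zero (MvPolynomial.X_ne_zero _) hc0
        · rw [fPu]
          exact X_mul_ne_X (by simp) _
      · rw [fPu]
        exact NN_mul (NN_X _) (IH c hc).2.2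
  · -- out-degree two: internal tree node
    obtain ⟨c₁, c₂, hne, a1, a2, hmem⟩ := children_two h2
    have hPu : P u = IMLN.yVar + P c₁ * P c₂ := hP.2.1 u c₁ c₂ hne a1 a2
    have huv : u ≠ v := fun h => by rw [h, hv.2] at h2; omega
    have fPu : killv N v (P u)
        = IMLN.yVar + killv N v (P c₁) * killv N v (P c₂) := by
      rw [hPu, map_add, map_mul, killv_yVar]
    have hn1 : ¬ N.outDeg u = 1 := by rw [h2]; omega
    refine ⟨?_, ?_, ?_⟩
    · intro hsr
      rw [if_neg hn1, fPu]
      have : ∃ w, N.Arc u w ∧ killv N v (P w) = 0 := by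
        rcases SR_cases hsr with rfl | ⟨w, hw, hcase⟩
        · exact absurd rfl huv
        · refine ⟨w, hw, ?_⟩
          rcases hcase with rfl | ⟨hre, hsrw⟩
          · exact killv_Pv hP hv
          · have hre' : N.IsRet w := hre.resolve_left (fun he => hN.2.1 w he)
            rw [(IH w hw).1 hsrw, if_pos hre'.2]
      obtain ⟨w, hw, hw0⟩ := this
      rcases hmem w hw with rfl | rfl
      · rw [hw0, zero_mul, add_zero]
      · rw [hw0, mul_zero, add_zero]
    · intro hns
      have hq0 : killv N v (P c₁) * killv N v (P c₂) ≠ 0 :=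
        mul_ne_zero (hch c₁ a1 hns) (hch c₂ a2 hns)
      have hqNN : NN (killv N v (P c₁) * killv N v (P c₂)) :=
        NN_mul (IH c₁ a1).2.2 (IH c₂ a2).2.2
      constructor
      · rw [fPu]; exact y_add_ne_zero hqNN
      · rw [fPu]
        intro h
        apply hq0
        have : IMLN.yVar + killv N v (P c₁) * killv N v (P c₂)
            = IMLN.yVar + 0 := by rw [add_zero]; exact h
        exact add_left_cancel this
    · rw [fPu]
      exact NN_y_add (NN_mul (IH c₁ a1).2.2 (IH c₂ a2).2.2)

end IMLNAux

/-- **Lemma (ret-desc).** Let `N` be an internally labelled phylogenetic network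
and `v` a reticulation node in it.  A node `u` is a strong ancestor of `v` if and
only if either `p(v) ∣ p(u)`, and then `u` is a reticulation node, or
`p(v) ∣ (p(u) - y)`, and then `u` is a tree node. -/
theorem IMLN.strong_ancestor_iff_dvd (X Λ : Type) (N : IMLN X Λ) (hN : N.IsILPN)
    (P : N.V → IMLN.PolyRing X Λ) (hP : IMLN.IsPolyAssignment N P)
    (v : N.V) (hv : N.IsRet v) (u : N.V) :
    IMLN.StrongReach N u v ↔
      ((P v ∣ P u ∧ N.IsRet u) ∨ (P v ∣ (P u - IMLN.yVar) ∧ N.IsTreeNode u)) := by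
  constructor
  · -- forward direction: induction on the strong path
    intro hsr
    revert hv
    induction hsr with
    | refl w => exact fun hw => Or.inl ⟨dvd_refl _, hw⟩
    | @single a b hab =>
      intro hb
      rcases IMLNAux.outdeg_cases hN a with h0 | h1 | h2
      · exact absurd hab (fun h => IMLNAux.no_child h0 h)
      · obtain ⟨c, hc, hcu⟩ := IMLNAux.child_unique h1
        have hbc : b = c := hcu b hab
        subst hbc
        exact Or.inl ⟨by rw [hP.2.2 a b h1 hc]; exact dvd_mul_left _ _,
          IMLNAux.ret_of_outdeg_one hN h1⟩
      · obtain ⟨c₁, c₂, hne, a1, a2, hmem⟩ := IMLNAux.children_two h2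
        have hPa : P a - IMLN.yVar = P c₁ * P c₂ := by
          rw [hP.2.1 a c₁ c₂ hne a1 a2, add_sub_cancel_left]
        refine Or.inr ⟨?_, by intro h; rw [h] at h2; omega⟩
        rw [hPa]
        rcases hmem b hab with rfl | rfl
        · exact Dvd.dvd.mul_right (dvd_refl _) _
        · exact Dvd.dvd.mul_left (dvd_refl _) _
    | @cons a w b haw hwre hsrw IH =>
      intro hb
      have hw : N.IsRet w := hwre.resolve_left (fun he => hN.2.1 w he)
      have hdvd : P b ∣ P w := by
        rcases IH hb with ⟨hd, -⟩ | ⟨-, htw⟩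
        · exact hd
        · exact absurd hw.2 htw
      rcases IMLNAux.outdeg_cases hN a with h0 | h1 | h2
      · exact absurd haw (fun h => IMLNAux.no_child h0 h)
      · obtain ⟨c, hc, hcu⟩ := IMLNAux.child_unique h1
        have hwc : w = c := hcu w haw
        subst hwc
        refine Or.inl ⟨?_, IMLNAux.ret_of_outdeg_one hN h1⟩
        rw [hP.2.2 a w h1 hc]
        exact hdvd.mul_left _
      · obtain ⟨c₁, c₂, hne, a1, a2, hmem⟩ := IMLNAux.children_two h2
        have hPa : P a - IMLN.yVar = P c₁ * P c₂ := by
          rw [hP.2.1 a c₁ c₂ hne a1 a2, add_sub_cancel_left]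
        refine Or.inr ⟨?_, by intro h; rw [h] at h2; omega⟩
        rw [hPa]
        rcases hmem w haw with rfl | rfl
        · exact hdvd.mul_right _
        · exact hdvd.mul_left _
  · -- backward direction: via the ring map killing λ_v
    intro h
    by_contra hns
    obtain ⟨hne0, hney⟩ := (IMLNAux.key N hN P hP v hv u).2.1 hns
    have hfPv : IMLNAux.killv N v (P v) = 0 := IMLNAux.killv_Pv hP hv
    rcases h with ⟨hd, -⟩ | ⟨hd, -⟩
    · have := map_dvd (IMLNAux.killv N v) hd
      rw [hfPv, zero_dvd_iff] at this
      exact hne0 this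
    · have := map_dvd (IMLNAux.killv N v) hd
      rw [hfPv, zero_dvd_iff, map_sub, IMLNAux.killv_yVar, sub_eq_zero] at this
      exact hney this
end
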